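/- arXiv:2305.16723 — 5 statements merged into one kernel-verified Lean document; each statement's English description precedes it below -/
import Mathlib

section
/- Let n ≥ 2, let 0 < c < 1, and let E ⊆ ℝ^n be a compact set of class UP_n(c). Set β = (log 2)/log(3/c). Then for every a ∈ E and every r with 0 < r < diam(E)/2, the β-dimensional Hausdorff content satisfies Λ^β(E ∩ B̄(a,r)) ≥ r^β/(2·3^n), where B̄(a,r) is the closed Euclidean ball of center a and radius r. -/
open Metric Set ENNReal MeasureTheory

set_option maxHeartbeats 1000000

lemma packing_lemma {n : ℕ} {ι : Type*} (s : ℝ) (hs : 0 < s)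
    (x : EuclideanSpace ℝ (Fin n)) (I : Finset ι) (p : ι → EuclideanSpace ℝ (Fin n))
    (hmem : ∀ i ∈ I, p i ∈ Metric.closedBall x s)
    (hsep : ∀ i ∈ I, ∀ j ∈ I, i ≠ j → s ≤ dist (p i) (p j)) :
    I.card ≤ 3 ^ n := by
  classical
  set μ : Measure (EuclideanSpace ℝ (Fin n)) := volume with hμ
  have hs2 : (0:ℝ) < s / 2 := by linarith
  have hdisj : (I : Set ι).Pairwise (Function.onFun Disjoint fun i => Metric.ball (p i) (s/2)) := by
    intro i hi j hj hij
    exact Metric.ball_disjoint_ball (by linarith [hsep i hi j hj hij])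
  have hsub : ∀ i ∈ I, Metric.ball (p i) (s/2) ⊆ Metric.closedBall x (3 * (s/2)) := by
    intro i hi y hy
    have h1 := hmem i hi
    simp only [Metric.mem_ball, Metric.mem_closedBall] at *
    calc dist y x ≤ dist y (p i) + dist (p i) x := dist_triangle _ _ _
      _ ≤ 3 * (s/2) := by linarith
  have h1 : ∑ i ∈ I, μ (Metric.ball (p i) (s/2)) ≤ μ (Metric.closedBall x (3 * (s/2))) := by
    rw [← measure_biUnion_finset hdisj (fun i _ => measurableSet_ball)]
    exact measure_mono (Set.iUnion₂_subset hsub)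
  have hball : ∀ i, μ (Metric.ball (p i) (s/2))
      = ENNReal.ofReal ((s/2) ^ n) * μ (Metric.ball 0 1) := by
    intro i
    rw [Measure.addHaar_ball_of_pos μ (p i) hs2, finrank_euclideanSpace_fin]
  have hcb : μ (Metric.closedBall x (3 * (s/2)))
      = ENNReal.ofReal ((3:ℝ) ^ n) * (ENNReal.ofReal ((s/2) ^ n) * μ (Metric.ball 0 1)) := by
    rw [Measure.addHaar_closedBall μ x (by positivity : (0:ℝ) ≤ 3 * (s/2)),
      finrank_euclideanSpace_fin, mul_pow, ENNReal.ofReal_mul (by positivity), mul_assoc]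
  have hv0 : μ (Metric.ball 0 1) ≠ 0 := (measure_ball_pos μ 0 one_pos).ne'
  have hvt : μ (Metric.ball 0 1) ≠ ⊤ := measure_ball_lt_top.ne
  have hw0 : ENNReal.ofReal ((s/2) ^ n) * μ (Metric.ball 0 1) ≠ 0 := by
    simp [ENNReal.ofReal_eq_zero, hv0, not_le, pow_pos hs2]
  have hwt : ENNReal.ofReal ((s/2) ^ n) * μ (Metric.ball 0 1) ≠ ⊤ :=
    ENNReal.mul_ne_top ENNReal.ofReal_ne_top hvt
  rw [hcb] at h1
  simp only [hball, Finset.sum_const, nsmul_eq_mul] at h1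
  have h2 : (I.card : ℝ≥0∞) ≤ ENNReal.ofReal ((3:ℝ) ^ n) :=
    (ENNReal.mul_le_mul_iff_left hw0 hwt).mp h1
  have h3 : ENNReal.ofReal ((3:ℝ)^n) = ((3^n : ℕ) : ℝ≥0∞) := by
    rw [← ENNReal.ofReal_natCast]; norm_num
  rw [h3] at h2
  exact_mod_cast h2

noncomputable def upTree {n : ℕ} (a : EuclideanSpace ℝ (Fin n))
    (child : EuclideanSpace ℝ (Fin n) → ℝ → EuclideanSpace ℝ (Fin n)) (ρ : ℕ → ℝ) :
    (m : ℕ) → (Fin m → Bool) → EuclideanSpace ℝ (Fin n)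
  | 0, _ => a
  | (m+1), v =>
      if v (Fin.last m) then child (upTree a child ρ m (v ∘ Fin.castSucc)) (ρ m)
      else upTree a child ρ m (v ∘ Fin.castSucc)

/-- The `β`-dimensional Hausdorff content of a set `A ⊆ ℝⁿ`: the infimum of `∑ rₖ ^ β`
over all countable covers of `A` by open balls `B(aₖ, rₖ)`. -/
noncomputable def hausdorffContent {n : ℕ} (β : ℝ) (A : Set (EuclideanSpace ℝ (Fin n))) :
    ℝ≥0∞ :=
  ⨅ (c : ℕ → EuclideanSpace ℝ (Fin n)) (r : ℕ → ℝ) (_ : ∀ k, 0 < r k)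
    (_ : A ⊆ ⋃ k, Metric.ball (c k) (r k)), ∑' k, ENNReal.ofReal (r k ^ β)

theorem stmt_0 (n : ℕ) (hn : 2 ≤ n) (c : ℝ) (hc0 : 0 < c) (hc1 : c < 1)
    (E : Set (EuclideanSpace ℝ (Fin n))) (hEcomp : IsCompact E) (hEcard : E.Nontrivial)
    (hUP : ∀ a ∈ E, ∀ r : ℝ, 0 < r → r < Metric.diam E / 2 →
      ∃ x ∈ E, c * r < dist x a ∧ dist x a < r)
    (β : ℝ) (hβ : β = Real.log 2 / Real.log (3 / c))
    (a : EuclideanSpace ℝ (Fin n)) (ha : a ∈ E)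
    (r : ℝ) (hr0 : 0 < r) (hr : r < Metric.diam E / 2) :
    ENNReal.ofReal (r ^ β / (2 * 3 ^ n)) ≤
      hausdorffContent β (E ∩ Metric.closedBall a r) := by
  classical
  -- basic facts about β
  have h3c : (1:ℝ) < 3 / c := by
    rw [lt_div_iff₀ hc0]; linarith
  have hlogpos : 0 < Real.log (3/c) := Real.log_pos h3c
  have hβpos : 0 < β := hβ ▸ div_pos (Real.log_pos one_lt_two) hlogpos
  have hc30 : (0:ℝ) < c/3 := by linarith
  have hc31 : c/3 < 1 := by linarith
  have hhalf : (c/3 : ℝ) ^ β = 1/2 := by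
    have h2 : ((3:ℝ)/c) ^ β = 2 := by
      rw [hβ, Real.rpow_def_of_pos (by linarith : (0:ℝ) < 3/c)]
      rw [mul_div_cancel₀ _ hlogpos.ne']
      exact Real.exp_log two_pos
    have hinv : (c/3 : ℝ) = ((3:ℝ)/c)⁻¹ := by
      rw [inv_div]
    rw [hinv, Real.inv_rpow (by linarith : (0:ℝ) ≤ 3/c), h2]
    norm_num
  -- the child function
  have hch : ∀ (x : EuclideanSpace ℝ (Fin n)) (ρ : ℝ), ∃ y,
      x ∈ E → 0 < ρ → ρ < Metric.diam E / 2 →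
      y ∈ E ∧ c * ρ < dist y x ∧ dist y x < ρ := by
    intro x ρ
    by_cases h : x ∈ E ∧ 0 < ρ ∧ ρ < Metric.diam E / 2
    · obtain ⟨y, hy1, hy2, hy3⟩ := hUP x h.1 ρ h.2.1 h.2.2
      exact ⟨y, fun _ _ _ => ⟨hy1, hy2, hy3⟩⟩
    · exact ⟨x, fun h1 h2 h3 => absurd ⟨h1, h2, h3⟩ h⟩
  choose child hchild using hch
  -- the radii
  set ρ : ℕ → ℝ := fun m => 2/3 * (c/3)^m * r with hρdef
  have hρpos : ∀ m, 0 < ρ m := fun m => by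
    have := pow_pos hc30 m; simp only [hρdef]; positivity
  have hρsucc : ∀ m, ρ (m+1) = (c/3) * ρ m := by
    intro m; simp only [hρdef, pow_succ]; ring
  have hρdec : ∀ m, ρ (m+1) ≤ ρ m := by
    intro m
    rw [hρsucc m]
    nlinarith [hρpos m]
  have hρle : ∀ m, ρ m ≤ 2/3 * r := by
    intro m
    have h1 : (c/3)^m ≤ 1 := pow_le_one₀ hc30.le hc31.le
    simp only [hρdef]
    nlinarith
  have hρlt : ∀ m, ρ m < Metric.diam E / 2 := fun m =>
    lt_of_le_of_lt (le_trans (hρle m) (by linarith)) hr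
  set g : (m : ℕ) → (Fin m → Bool) → EuclideanSpace ℝ (Fin n) := upTree a child ρ with hgdef
  have gsucc : ∀ (m : ℕ) (v : Fin (m+1) → Bool), g (m+1) v =
      if v (Fin.last m) then child (g m (v ∘ Fin.castSucc)) (ρ m)
      else g m (v ∘ Fin.castSucc) := fun _ _ => rfl
  -- invariant 1 : membership and distance to a
  have hg1 : ∀ (m : ℕ) (v : Fin m → Bool), g m v ∈ E ∧ dist (g m v) a ≤ r - 3/2 * ρ m := by
    intro m
    induction m with
    | zero =>
      intro v
      refine ⟨ha, ?_⟩
      have : g 0 v = a := rfl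
      rw [this, dist_self]
      simp only [hρdef, pow_zero]
      linarith
    | succ m ih =>
      intro v
      have hx := ih (v ∘ Fin.castSucc)
      rw [gsucc]
      have hkey : 3/2 * ρ (m+1) ≤ 1/2 * ρ m := by
        rw [hρsucc m]
        nlinarith [hρpos m, mul_le_mul_of_nonneg_right hc1.le (hρpos m).le]
      by_cases hb : v (Fin.last m)
      · have hcc := hchild _ (ρ m) hx.1 (hρpos m) (hρlt m)
        simp only [hb, if_true]
        refine ⟨hcc.1, ?_⟩
        calc dist (child (g m (v ∘ Fin.castSucc)) (ρ m)) a
            ≤ dist (child (g m (v ∘ Fin.castSucc)) (ρ m)) (g m (v ∘ Fin.castSucc))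
              + dist (g m (v ∘ Fin.castSucc)) a := dist_triangle _ _ _
          _ ≤ ρ m + (r - 3/2 * ρ m) := add_le_add hcc.2.2.le hx.2
          _ ≤ r - 3/2 * ρ (m+1) := by linarith
      · simp only [hb, if_false]
        exact ⟨hx.1, hx.2.trans (by linarith [hρpos m])⟩
  -- one-step drift
  have hstep : ∀ (m : ℕ) (v : Fin (m+1) → Bool),
      dist (g (m+1) v) (g m (v ∘ Fin.castSucc)) ≤ ρ m := by
    intro m v
    rw [gsucc]
    by_cases hb : v (Fin.last m)
    · simp only [hb, if_true]
      exact (hchild _ (ρ m) (hg1 m _).1 (hρpos m) (hρlt m)).2.2.le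
    · simp only [hb, Bool.false_eq_true, ↓reduceIte, dist_self]
      exact (hρpos m).le
  -- invariant 2 : separation
  have hg2 : ∀ (m : ℕ) (v w : Fin m → Bool), v ≠ w → 3 * ρ m ≤ dist (g m v) (g m w) := by
    intro m
    induction m with
    | zero => intro v w hvw; exact absurd (funext fun i => i.elim0) hvw
    | succ m ih =>
      intro v w hvw
      have hkey : 3 * ρ (m+1) ≤ c * ρ m := by
        rw [hρsucc m]; nlinarith [hρpos m]
      by_cases hvw' : v ∘ Fin.castSucc = w ∘ Fin.castSucc
      · have hne : v (Fin.last m) ≠ w (Fin.last m) := by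
          intro h
          apply hvw
          funext i
          refine Fin.lastCases h (fun j => ?_) i
          exact congrFun hvw' j
        have hcc := hchild (g m (v ∘ Fin.castSucc)) (ρ m) (hg1 m _).1 (hρpos m) (hρlt m)
        rw [gsucc, gsucc, ← hvw']
        cases hv : v (Fin.last m) <;> cases hw : w (Fin.last m) <;>
          simp only [Bool.false_eq_true, ↓reduceIte] <;>
          first
          | (exact absurd (hv.trans hw.symm) hne)
          | (rw [dist_comm]; linarith [hcc.2.1])
          | (linarith [hcc.2.1])
      · have h1 := ih _ _ hvw'
        have h2 := hstep m v
        have h3 := hstep m w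
        have h4 : dist (g m (v ∘ Fin.castSucc)) (g m (w ∘ Fin.castSucc)) ≤
            dist (g m (v ∘ Fin.castSucc)) (g (m+1) v) + dist (g (m+1) v) (g (m+1) w)
            + dist (g (m+1) w) (g m (w ∘ Fin.castSucc)) := dist_triangle4 _ _ _ _
        rw [dist_comm (g m (v ∘ Fin.castSucc)) (g (m+1) v)] at h4
        have hc' : c * ρ m ≤ ρ m := by nlinarith [hρpos m]
        linarith
  -- invariant 3 : drift to ancestors
  have hg3 : ∀ (m M : ℕ) (h : m ≤ M) (v : Fin M → Bool),
      dist (g M v) (g m (v ∘ Fin.castLE h)) ≤ 3/2 * (ρ m - ρ M) := by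
    intro m M h
    induction M with
    | zero =>
      intro v
      interval_cases m
      have : v ∘ Fin.castLE (le_refl 0) = v := funext fun i => i.elim0
      rw [this, dist_self]
      linarith
    | succ M ihM =>
      intro v
      rcases Nat.lt_or_ge m (M+1) with hm | hm
      · have hmM : m ≤ M := by omega
        have hcomp : (v ∘ Fin.castSucc) ∘ Fin.castLE hmM = v ∘ Fin.castLE h := by
          funext i; exact congrArg v (Fin.ext rfl)
        have h1 := hstep M v
        have h2 := ihM hmM (v ∘ Fin.castSucc)
        rw [hcomp] at h2
        have h3 := dist_triangle (g (M+1) v) (g M (v ∘ Fin.castSucc)) (g m (v ∘ Fin.castLE h))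
        have h4 : ρ (M+1) ≤ ρ M := hρdec M
        have hkey : 3/2 * ρ (M+1) ≤ 1/2 * ρ M := by
          rw [hρsucc M]
          nlinarith [hρpos M, mul_le_mul_of_nonneg_right hc1.le (hρpos M).le]
        linarith
      · have hm' : m = M + 1 := by omega
        subst hm'
        have : v ∘ Fin.castLE h = v := funext fun i => congrArg v (Fin.ext rfl)
        rw [this, dist_self]
        linarith
  -- points of the tree lie in the target set
  have hgS : ∀ (m : ℕ) (v : Fin m → Bool), g m v ∈ E ∩ Metric.closedBall a r := by
    intro m v
    refine ⟨(hg1 m v).1, ?_⟩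
    rw [Metric.mem_closedBall]
    linarith [(hg1 m v).2, hρpos m]
  -- unfold the content and take a cover
  unfold hausdorffContent
  refine le_iInf fun cs => le_iInf fun rs => le_iInf fun hrs => le_iInf fun hcov => ?_
  have hScomp : IsCompact (E ∩ Metric.closedBall a r) :=
    hEcomp.inter_right Metric.isClosed_closedBall
  obtain ⟨K, hK⟩ := hScomp.elim_finite_subcover (fun k => Metric.ball (cs k) (rs k))
    (fun k => isOpen_ball) hcov
  -- the critical scale for each ball of the cover
  have hex : ∀ k : ℕ, ∃ m, 3 * ρ (m+1) ≤ 2 * rs k := by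
    intro k
    obtain ⟨m, hm⟩ := exists_pow_lt_of_lt_one
      (show (0:ℝ) < rs k / r from div_pos (hrs k) hr0) hc31
    refine ⟨m, ?_⟩
    have h1 : (c/3)^(m+1) ≤ (c/3)^m := by
      rw [pow_succ]
      nlinarith [pow_pos hc30 m]
    have h2 : (c/3)^(m+1) ≤ rs k / r := le_trans h1 hm.le
    have h3 : (c/3)^(m+1) * r ≤ rs k := (le_div_iff₀ hr0).mp h2
    simp only [hρdef]
    calc 3 * (2/3*(c/3)^(m+1)*r) = 2 * ((c/3)^(m+1)*r) := by ring
      _ ≤ 2 * rs k := by linarith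
  let mk : ℕ → ℕ := fun k => Nat.find (hex k)
  have hmk1 : ∀ k, 3 * ρ (mk k + 1) ≤ 2 * rs k := fun k => Nat.find_spec (hex k)
  have hmk2 : ∀ k, 1 ≤ mk k → 2 * rs k < 3 * ρ (mk k) := by
    intro k hk
    have h1 := Nat.find_min (hex k) (show mk k - 1 < mk k by omega)
    push_neg at h1
    have heq : mk k - 1 + 1 = mk k := by omega
    rw [heq] at h1
    linarith
  set M : ℕ := K.sup mk + 1 with hMdef
  have hmkM : ∀ k ∈ K, mk k ≤ M := fun k hk =>
    le_trans (Finset.le_sup (f := mk) hk) (Nat.le_succ _)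
  -- counting: each cover ball contains few tree points of level M
  have hcount : ∀ k ∈ K,
      (Finset.univ.filter (fun v : Fin M → Bool => g M v ∈ Metric.ball (cs k) (rs k))).card
        ≤ 3^n * 2^(M - mk k) := by
    intro k hkK
    set T := Finset.univ.filter (fun v : Fin M → Bool => g M v ∈ Metric.ball (cs k) (rs k))
      with hTdef
    rcases Nat.eq_zero_or_pos (mk k) with hm0 | hm1
    · have h1 : T.card ≤ 2 ^ M := by
        calc T.card ≤ (Finset.univ : Finset (Fin M → Bool)).card := Finset.card_filter_le _ _
          _ = 2 ^ M := by simp [Finset.card_univ, Fintype.card_fun]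
      have h2 : (1:ℕ) ≤ 3^n := Nat.one_le_pow n 3 (by norm_num)
      calc T.card ≤ 2^M := h1
        _ = 1 * 2^(M - mk k) := by simp [hm0]
        _ ≤ 3^n * 2^(M - mk k) := Nat.mul_le_mul_right _ h2
    · have hmM : mk k ≤ M := hmkM k hkK
      set τ : (Fin M → Bool) → (Fin (mk k) → Bool) := fun v => v ∘ Fin.castLE hmM with hτ
      have hfiber : ∀ b ∈ T.image τ, (T.filter fun v => τ v = b).card ≤ 2^(M - mk k) := by
        intro b _
        have hinj : Set.InjOn
            (fun (v : Fin M → Bool) (j : Fin (M - mk k)) => v ⟨mk k + j.1, by have := j.2; omega⟩)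
            ↑(T.filter fun v => τ v = b) := by
          intro v hv w hw hvw
          simp only [Finset.coe_filter, Set.mem_setOf_eq] at hv hw
          funext i
          rcases Nat.lt_or_ge i.1 (mk k) with hi | hi
          · have h1 : v (Fin.castLE hmM ⟨i.1, hi⟩) = b ⟨i.1, hi⟩ := congrFun hv.2 ⟨i.1, hi⟩
            have h2 : w (Fin.castLE hmM ⟨i.1, hi⟩) = b ⟨i.1, hi⟩ := congrFun hw.2 ⟨i.1, hi⟩
            have h3 : Fin.castLE hmM ⟨i.1, hi⟩ = i := Fin.ext rfl
            rw [h3] at h1 h2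
            rw [h1, h2]
          · have hj : i.1 - mk k < M - mk k := by omega
            have h1 := congrFun hvw ⟨i.1 - mk k, hj⟩
            simp only at h1
            have h3 : (⟨mk k + (i.1 - mk k), by have := i.2; omega⟩ : Fin M) = i := by
              apply Fin.ext
              show mk k + (i.1 - mk k) = i.1
              omega
            rwa [h3] at h1
        calc (T.filter fun v => τ v = b).card
            ≤ (Finset.univ : Finset (Fin (M - mk k) → Bool)).card :=
              Finset.card_le_card_of_injOn _ (fun x _ => Finset.mem_univ _) hinj
          _ = 2^(M - mk k) := by simp [Finset.card_univ, Fintype.card_fun]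
      have himg : (T.image τ).card ≤ 3^n := by
        apply packing_lemma (3 * ρ (mk k)) (by positivity) (cs k) (T.image τ) (g (mk k))
        · intro w hw
          obtain ⟨v, hvT, hvw⟩ := Finset.mem_image.mp hw
          rw [hTdef, Finset.mem_filter] at hvT
          have hd : dist (g M v) (cs k) < rs k := Metric.mem_ball.mp hvT.2
          have hdrift := hg3 (mk k) M hmM v
          have hrs' : rs k < 3/2 * ρ (mk k) := by linarith [hmk2 k hm1]
          rw [Metric.mem_closedBall, ← hvw, hτ]
          calc dist (g (mk k) (v ∘ Fin.castLE hmM)) (cs k)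
              ≤ dist (g (mk k) (v ∘ Fin.castLE hmM)) (g M v) + dist (g M v) (cs k) :=
                dist_triangle _ _ _
            _ ≤ 3/2 * (ρ (mk k) - ρ M) + rs k :=
                add_le_add (by rw [dist_comm]; exact hdrift) hd.le
            _ ≤ 3 * ρ (mk k) := by linarith [hρpos M]
        · intro i hi j hj hij
          exact hg2 (mk k) i j hij
      calc T.card ≤ 2^(M - mk k) * (T.image τ).card := Finset.card_le_mul_card_image T _ hfiber
        _ ≤ 2^(M - mk k) * 3^n := Nat.mul_le_mul_left _ himg
        _ = 3^n * 2^(M - mk k) := Nat.mul_comm _ _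
  -- total count
  have htot : (2:ℕ)^M ≤ ∑ k ∈ K,
      (Finset.univ.filter (fun v : Fin M → Bool => g M v ∈ Metric.ball (cs k) (rs k))).card := by
    have hsub : (Finset.univ : Finset (Fin M → Bool)) ⊆
        K.biUnion (fun k => Finset.univ.filter
          (fun v : Fin M → Bool => g M v ∈ Metric.ball (cs k) (rs k))) := by
      intro v _
      have hv := hK (hgS M v)
      simp only [Set.mem_iUnion] at hv
      obtain ⟨k, hk1, hk2⟩ := hv
      exact Finset.mem_biUnion.mpr ⟨k, hk1, Finset.mem_filter.mpr ⟨Finset.mem_univ _, hk2⟩⟩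
    calc (2:ℕ)^M = (Finset.univ : Finset (Fin M → Bool)).card := by
          simp [Finset.card_univ, Fintype.card_fun]
      _ ≤ _ := le_trans (Finset.card_le_card hsub) (Finset.card_biUnion_le)
  -- pass to real numbers
  have hreal : (1:ℝ) ≤ 3^n * ∑ k ∈ K, (1/2 : ℝ)^(mk k) := by
    have h2M : (0:ℝ) < 2^M := by positivity
    have h1 : (2:ℝ)^M ≤ ∑ k ∈ K, (3:ℝ)^n * (2^M * (1/2)^(mk k)) := by
      have hcast : ((2:ℕ)^M : ℝ) ≤ (↑(∑ k ∈ K,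
          (Finset.univ.filter (fun v : Fin M → Bool =>
            g M v ∈ Metric.ball (cs k) (rs k))).card) : ℝ) := by exact_mod_cast htot
      push_cast at hcast
      refine le_trans hcast (Finset.sum_le_sum fun k hk => ?_)
      have hck : ((Finset.univ.filter (fun v : Fin M → Bool =>
          g M v ∈ Metric.ball (cs k) (rs k))).card : ℝ) ≤ (3:ℝ)^n * 2^(M - mk k) := by
        exact_mod_cast hcount k hk
      have hpow : (2:ℝ)^(M - mk k) = 2^M * (1/2)^(mk k) := by
        have h := hmkM k hk
        have h2 : (2:ℝ)^M = 2^(M - mk k) * 2^(mk k) := by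
          rw [← pow_add]; congr 1; omega
        rw [h2, one_div, inv_pow]
        field_simp
      rw [← hpow]
      exact hck
    have h2 : (2:ℝ)^M ≤ 2^M * (3^n * ∑ k ∈ K, (1/2 : ℝ)^(mk k)) := by
      refine h1.trans (le_of_eq ?_)
      rw [Finset.mul_sum, Finset.mul_sum]
      exact Finset.sum_congr rfl fun k _ => by ring
    have h3 : (2:ℝ)^M * 1 ≤ 2^M * (3^n * ∑ k ∈ K, (1/2 : ℝ)^(mk k)) := by linarith
    exact (mul_le_mul_iff_right₀ h2M).mp h3
  -- each (1/2)^(mk k) is controlled by the radius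
  have hkey : ∀ k, ((1:ℝ)/2)^(mk k) ≤ 2 * (rs k / r) ^ β := by
    intro k
    have h1 : (c/3)^(mk k + 1) * r ≤ rs k := by
      have := hmk1 k
      simp only [hρdef] at this
      nlinarith
    have h2 : ((c/3 : ℝ))^(mk k + 1) ≤ rs k / r := (le_div_iff₀ hr0).mpr h1
    have h3 : (((c/3 : ℝ))^(mk k + 1)) ^ β ≤ (rs k / r) ^ β :=
      Real.rpow_le_rpow (by positivity) h2 hβpos.le
    have h4 : (((c/3 : ℝ))^(mk k + 1)) ^ β = ((1:ℝ)/2)^(mk k + 1) := by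
      rw [← Real.rpow_natCast (c/3) (mk k + 1), ← Real.rpow_mul hc30.le, mul_comm,
        Real.rpow_mul hc30.le, hhalf, Real.rpow_natCast]
    rw [h4] at h3
    have h5 : ((1:ℝ)/2)^(mk k + 1) = ((1:ℝ)/2)^(mk k) * (1/2) := pow_succ _ _
    linarith [h3, h5 ▸ h3]
    -- conclusion
  have hrβ : (0:ℝ) < r ^ β := Real.rpow_pos_of_pos hr0 β
  have hfinal : r ^ β / (2 * 3^n) ≤ ∑ k ∈ K, rs k ^ β := by
    have h2 : ∑ k ∈ K, ((1:ℝ)/2)^(mk k) ≤ ∑ k ∈ K, 2 * (rs k ^ β / r ^ β) := by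
      refine Finset.sum_le_sum fun k hk => ?_
      have h := hkey k
      rwa [Real.div_rpow (hrs k).le hr0.le] at h
    have h3 : (1:ℝ) ≤ 3^n * ((2 / r ^ β) * ∑ k ∈ K, rs k ^ β) := by
      refine le_trans hreal ?_
      refine mul_le_mul_of_nonneg_left (h2.trans (le_of_eq ?_)) (by positivity)
      rw [Finset.mul_sum]
      exact Finset.sum_congr rfl fun k _ => by ring
    have h6 : r ^ β * 1 ≤ r ^ β * (3^n * ((2 / r ^ β) * ∑ k ∈ K, rs k ^ β)) :=
      mul_le_mul_of_nonneg_left h3 hrβ.le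
    have h7 : r ^ β * (3^n * ((2 / r ^ β) * ∑ k ∈ K, rs k ^ β))
        = 2 * 3^n * ∑ k ∈ K, rs k ^ β := by
      field_simp
    rw [h7, mul_one] at h6
    rw [div_le_iff₀ (by positivity : (0:ℝ) < 2 * 3^n)]
    linarith
  calc ENNReal.ofReal (r^β/(2*3^n)) ≤ ENNReal.ofReal (∑ k ∈ K, rs k ^ β) :=
        ENNReal.ofReal_le_ofReal hfinal
    _ = ∑ k ∈ K, ENNReal.ofReal (rs k ^ β) :=
        ENNReal.ofReal_sum_of_nonneg (fun k _ => Real.rpow_nonneg (hrs k).le β)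
    _ ≤ ∑' k, ENNReal.ofReal (rs k ^ β) := ENNReal.sum_le_tsum K
end

section
/- Let n ≥ 2, let 0 < c < 1, and let E ⊆ ℝ^n be a compact set of class UP_n(c). Then the Hausdorff dimension of E is at least (log 2)/log(3/c). -/
open Metric Set MeasureTheory
open scoped ENNReal NNReal

set_option maxHeartbeats 1000000 in
theorem stmt_1 (n : ℕ) (hn : 2 ≤ n) (c : ℝ) (hc0 : 0 < c) (hc1 : c < 1)
    (E : Set (EuclideanSpace ℝ (Fin n))) (hEcomp : IsCompact E) (hEcard : E.Nontrivial)
    (hUP : ∀ a ∈ E, ∀ r : ℝ, 0 < r → r < Metric.diam E / 2 →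
      ∃ x ∈ E, c * r < dist x a ∧ dist x a < r) :
    ENNReal.ofReal (Real.log 2 / Real.log (3 / c)) ≤ dimH E := by
  classical
  obtain ⟨p₀, hp₀, q₀, hq₀, hpq⟩ := hEcard
  have hc3 : (0:ℝ) < 3 - c := by linarith
  have hDpos : 0 < diam E := by
    have h1 := dist_pos.2 hpq
    have h2 := dist_le_diam_of_mem hEcomp.isBounded hp₀ hq₀
    linarith
  set ρ : ℝ := c / 3 with hρdef
  have hρ0 : 0 < ρ := by positivity
  have hρ1 : ρ < 1 := by rw [hρdef]; linarith
  set r : ℕ → ℝ := fun k => diam E / 4 * ρ ^ k with hrdef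
  have hrpos : ∀ k, 0 < r k := fun k => by positivity
  have hrsucc : ∀ k, r (k + 1) = ρ * r k := fun k => by
    simp only [hrdef, pow_succ]; ring
  have hrmono : ∀ k, r (k + 1) ≤ r k := fun k => by
    rw [hrsucc k]; nlinarith [hrpos k]
  have hrlt : ∀ k, r k < diam E / 2 := by
    intro k
    have : ρ ^ k ≤ 1 := pow_le_one₀ hρ0.le hρ1.le
    have : r k ≤ diam E / 4 * 1 := by
      rw [hrdef]
      exact mul_le_mul_of_nonneg_left this (by linarith)
    linarith
  -- the chosen "child" point
  have hg0 : ∀ p ∈ E, ∀ k : ℕ, ∃ q ∈ E,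
      c * r (k + 1) < dist q p ∧ dist q p < r (k + 1) :=
    fun p hp k => hUP p hp (r (k + 1)) (hrpos _) (hrlt _)
  set g : (EuclideanSpace ℝ (Fin n)) → ℕ → (EuclideanSpace ℝ (Fin n)) := fun p k => if h : p ∈ E then (hg0 p h k).choose else p with hgdef
  have hgspec : ∀ p (hp : p ∈ E) (k : ℕ), g p k ∈ E ∧
      c * r (k + 1) < dist (g p k) p ∧ dist (g p k) p < r (k + 1) := by
    intro p hp k
    simp only [hgdef, dif_pos hp]
    obtain ⟨h1, h2, h3⟩ := (hg0 p hp k).choose_spec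
    exact ⟨h1, h2, h3⟩
  -- the tree of points
  set x : ℕ → ℕ → (EuclideanSpace ℝ (Fin n)) := fun k => Nat.rec (fun _ => p₀)
    (fun k xk m => if m % 2 = 0 then xk (m / 2) else g (xk (m / 2)) k) k with hxdef
  have hx0 : ∀ m, x 0 m = p₀ := fun _ => rfl
  have hxs : ∀ k m, x (k + 1) m =
      if m % 2 = 0 then x k (m / 2) else g (x k (m / 2)) k := fun _ _ => rfl
  have hxE : ∀ k m, x k m ∈ E := by
    intro k
    induction k with
    | zero => intro m; exact hp₀
    | succ k ih =>
      intro m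
      rw [hxs]
      split
      · exact ih _
      · exact (hgspec _ (ih (m / 2)) k).1
  have hstep : ∀ k m, dist (x (k + 1) m) (x k (m / 2)) ≤ r (k + 1) := by
    intro k m
    rw [hxs]
    split
    · simp [(hrpos (k+1)).le]
    · exact (hgspec _ (hxE k (m / 2)) k).2.2.le
  -- the branch sequences
  set y : ℝ → ℕ → (EuclideanSpace ℝ (Fin n)) := fun t k => x k ⌊t * 2 ^ k⌋₊ with hydef
  have hfloor : ∀ (t : ℝ) (k : ℕ), ⌊t * 2 ^ (k + 1)⌋₊ / 2 = ⌊t * 2 ^ k⌋₊ := by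
    intro t k
    rw [← Nat.floor_div_ofNat]
    congr 1
    push_cast
    ring
  have hystep : ∀ t k, dist (y t (k + 1)) (y t k) ≤ r (k + 1) := by
    intro t k
    have := hstep k ⌊t * 2 ^ (k + 1)⌋₊
    rwa [hfloor t k] at this
  set δ : ℕ → ℝ := fun k => r k * (c / (3 - c)) with hδdef
  have hδpos : ∀ k, 0 < δ k := fun k => by
    have := hrpos k; simp only [hδdef]; positivity
  have hδstep : ∀ m, δ m - δ (m + 1) = r (m + 1) := by
    intro m
    simp only [hδdef, hrsucc m, hρdef]
    field_simp
  have htail : ∀ t k m, k ≤ m → dist (y t m) (y t k) ≤ δ k - δ m := by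
    intro t k m hkm
    induction m, hkm using Nat.le_induction with
    | base => simp
    | succ m hkm ih =>
      calc dist (y t (m + 1)) (y t k)
          ≤ dist (y t (m + 1)) (y t m) + dist (y t m) (y t k) := dist_triangle _ _ _
        _ ≤ r (m + 1) + (δ k - δ m) := add_le_add (hystep t m) ih
        _ = δ k - δ (m + 1) := by have := hδstep m; linarith
  have hcauchy : ∀ t, CauchySeq (y t) := by
    intro t
    apply cauchySeq_of_le_geometric ρ (diam E / 4 * ρ) hρ1
    intro k
    rw [dist_comm]
    calc dist (y t (k + 1)) (y t k) ≤ r (k + 1) := hystep t k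
      _ = diam E / 4 * ρ * ρ ^ k := by rw [hrdef]; ring
  have hconv : ∀ t : ℝ, ∃ L, Filter.Tendsto (y t) Filter.atTop (nhds L) :=
    fun t => cauchySeq_tendsto_of_complete (hcauchy t)
  set F : ℝ → (EuclideanSpace ℝ (Fin n)) := fun t => (hconv t).choose with hFdef
  have hF : ∀ t, Filter.Tendsto (y t) Filter.atTop (nhds (F t)) :=
    fun t => (hconv t).choose_spec
  have hFE : ∀ t, F t ∈ E := fun t =>
    hEcomp.isClosed.mem_of_tendsto (hF t) (Filter.Eventually.of_forall fun k => hxE _ _)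
  have hFdist : ∀ t k, dist (F t) (y t k) ≤ δ k := by
    intro t k
    have h1 : Filter.Tendsto (fun m => dist (y t m) (y t k)) Filter.atTop
        (nhds (dist (F t) (y t k))) := (hF t).dist tendsto_const_nhds
    refine le_of_tendsto h1 ?_
    filter_upwards [Filter.eventually_ge_atTop k] with m hm
    have := htail t k m hm
    have := (hδpos m).le
    linarith
  set κ : ℝ := c * (1 - c) / (3 - c) with hκdef
  have hκ0 : 0 < κ := by
    rw [hκdef]
    have h1 : 0 < 1 - c := by linarith
    exact div_pos (mul_pos hc0 h1) hc3
  have hκsep : ∀ j, κ * r (j + 1) = c * r (j + 1) - 2 * δ (j + 1) := by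
    intro j
    simp only [hκdef, hδdef]
    field_simp
    ring
  -- separation
  have hsep : ∀ k : ℕ, ∀ s ∈ Ico (0:ℝ) 1, ∀ t ∈ Ico (0:ℝ) 1,
      ⌊s * 2 ^ k⌋₊ ≠ ⌊t * 2 ^ k⌋₊ → κ * r k ≤ dist (F s) (F t) := by
    intro k
    induction k with
    | zero =>
      intro s hs t ht hne
      exfalso
      apply hne
      rw [show (2:ℝ)^0 = 1 by norm_num, mul_one, mul_one,
        Nat.floor_eq_zero.2 hs.2, Nat.floor_eq_zero.2 ht.2]
    | succ k ih =>
      intro s hs t ht hne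
      by_cases h : ⌊s * 2 ^ k⌋₊ = ⌊t * 2 ^ k⌋₊
      swap
      · have h1 := ih s hs t ht h
        have h2 : κ * r (k + 1) ≤ κ * r k :=
          mul_le_mul_of_nonneg_left (hrmono k) hκ0.le
        linarith
      · -- same floor at level k, distinct at level k+1
        set p := ⌊s * 2 ^ k⌋₊ with hp
        have hs2 : ⌊s * 2 ^ (k + 1)⌋₊ / 2 = p := hfloor s k
        have ht2 : ⌊t * 2 ^ (k + 1)⌋₊ / 2 = p := by rw [hfloor t k, ← h]
        have hsm : ⌊s * 2 ^ (k + 1)⌋₊ = 2 * p + ⌊s * 2 ^ (k + 1)⌋₊ % 2 := by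
          conv_lhs => rw [← Nat.div_add_mod ⌊s * 2 ^ (k + 1)⌋₊ 2]
          rw [hs2]
        have htm : ⌊t * 2 ^ (k + 1)⌋₊ = 2 * p + ⌊t * 2 ^ (k + 1)⌋₊ % 2 := by
          conv_lhs => rw [← Nat.div_add_mod ⌊t * 2 ^ (k + 1)⌋₊ 2]
          rw [ht2]
        have hbits : ⌊s * 2 ^ (k + 1)⌋₊ % 2 ≠ ⌊t * 2 ^ (k + 1)⌋₊ % 2 := by
          intro hb; apply hne; rw [hsm, htm, hb]
        -- key distance bound at level k+1
        have hkey : c * r (k + 1) ≤ dist (y s (k + 1)) (y t (k + 1)) := by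
          have heval : ∀ u : ℝ, ⌊u * 2 ^ k⌋₊ = p →
              (⌊u * 2 ^ (k + 1)⌋₊ % 2 = 0 → y u (k + 1) = x k p) ∧
              (⌊u * 2 ^ (k + 1)⌋₊ % 2 = 1 → y u (k + 1) = g (x k p) k) := by
            intro u hu
            constructor <;> intro hb <;>
              simp only [hydef, hxs, hfloor u k, hu, hb] <;> simp
          have hxs' := heval s hp.symm
          have hxt' := heval t (h ▸ hp.symm)
          have hd := (hgspec (x k p) (hxE k p) k).2.1
          rcases Nat.mod_two_eq_zero_or_one ⌊s * 2 ^ (k + 1)⌋₊ with h1 | h1 <;>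
            rcases Nat.mod_two_eq_zero_or_one ⌊t * 2 ^ (k + 1)⌋₊ with h2 | h2
          · exact absurd (h1.trans h2.symm) hbits
          · rw [hxs'.1 h1, hxt'.2 h2, dist_comm]; exact hd.le
          · rw [hxs'.2 h1, hxt'.1 h2]; exact hd.le
          · exact absurd (h1.trans h2.symm) hbits
        have d1 := hFdist s (k + 1)
        have d2 := hFdist t (k + 1)
        have htri : dist (y s (k + 1)) (y t (k + 1)) ≤
            dist (F s) (y s (k + 1)) + dist (F s) (F t) + dist (F t) (y t (k + 1)) := by
          rw [dist_comm (F s) (y s (k + 1))]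
          exact dist_triangle4 _ _ _ _
        rw [hκsep k]
        linarith
  -- measurability of F
  have hymeas : ∀ k, Measurable fun t : ℝ => y t k := by
    intro k
    exact measurable_from_top.comp ((measurable_id.mul_const _).nat_floor)
  have hFmeas : Measurable F :=
    measurable_of_tendsto_metrizable hymeas
      (by rw [tendsto_pi_nhds]; exact hF)
  -- the measure
  set μ : Measure (EuclideanSpace ℝ (Fin n)) := Measure.map F (volume.restrict (Ico (0:ℝ) 1)) with hμdef
  have hμapp : ∀ s : Set (EuclideanSpace ℝ (Fin n)), MeasurableSet s → μ s = volume (F ⁻¹' s ∩ Ico 0 1) := by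
    intro s hs
    rw [hμdef, Measure.map_apply hFmeas hs, Measure.restrict_apply (hFmeas hs)]
  have hμE : μ E = 1 := by
    rw [hμapp E hEcomp.isClosed.measurableSet]
    have : F ⁻¹' E ∩ Ico 0 1 = Ico (0:ℝ) 1 := by
      apply inter_eq_self_of_subset_right
      intro t _; exact hFE t
    rw [this, Real.volume_Ico]
    norm_num
  -- Frostman estimate at each scale
  have hfrost : ∀ (k : ℕ) (s : Set (EuclideanSpace ℝ (Fin n))), MeasurableSet s →
      EMetric.diam s < ENNReal.ofReal (κ * r k) →
      μ s ≤ ENNReal.ofReal ((2:ℝ)⁻¹ ^ k) := by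
    intro k s hs hdiam
    rw [hμapp s hs]
    rcases eq_empty_or_nonempty (F ⁻¹' s ∩ Ico 0 1) with hA | ⟨t₀, ht₀s, ht₀I⟩
    · rw [hA]; simp
    · set m := ⌊t₀ * 2 ^ k⌋₊ with hm
      have hsub : F ⁻¹' s ∩ Ico 0 1 ⊆ Ico ((m:ℝ) / 2 ^ k) ((m + 1) / 2 ^ k) := by
        rintro t ⟨hts, htI⟩
        have hfl : ⌊t * 2 ^ k⌋₊ = m := by
          by_contra hne
          have h1 := hsep k t htI t₀ ht₀I hne
          have h2 : edist (F t) (F t₀) < ENNReal.ofReal (κ * r k) :=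
            lt_of_le_of_lt (EMetric.edist_le_diam_of_mem hts ht₀s) hdiam
          rw [edist_lt_ofReal] at h2
          linarith
        have h0 : (0:ℝ) ≤ t * 2 ^ k := by
          have := htI.1
          positivity
        rw [Nat.floor_eq_iff h0] at hfl
        obtain ⟨hl, hu⟩ := hfl
        have h2k : (0:ℝ) < 2 ^ k := by positivity
        constructor
        · rw [div_le_iff₀ h2k]; linarith
        · rw [lt_div_iff₀ h2k]; push_cast; linarith
      calc volume (F ⁻¹' s ∩ Ico 0 1)
          ≤ volume (Ico ((m:ℝ) / 2 ^ k) ((m + 1) / 2 ^ k)) := measure_mono hsub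
        _ = ENNReal.ofReal ((2:ℝ)⁻¹ ^ k) := by
            rw [Real.volume_Ico]
            congr 1
            rw [inv_pow]
            field_simp
            ring
  -- sets of zero diameter get zero measure
  have hzero : ∀ s : Set (EuclideanSpace ℝ (Fin n)), MeasurableSet s → EMetric.diam s = 0 → μ s = 0 := by
    intro s hs hd
    have hle : ∀ k : ℕ, μ s ≤ ENNReal.ofReal ((2:ℝ)⁻¹ ^ k) := by
      intro k
      apply hfrost k s hs
      rw [hd]
      exact ENNReal.ofReal_pos.2 (mul_pos hκ0 (hrpos k))
    have htend : Filter.Tendsto (fun k : ℕ => ENNReal.ofReal ((2:ℝ)⁻¹ ^ k))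
        Filter.atTop (nhds 0) := by
      rw [show (0:ℝ≥0∞) = ENNReal.ofReal 0 by simp]
      exact ENNReal.tendsto_ofReal
        (tendsto_pow_atTop_nhds_zero_of_lt_one (by norm_num) (by norm_num))
    simpa using ge_of_tendsto' htend hle
  -- the exponent
  set d : ℝ := Real.log 2 / Real.log (3 / c) with hddef
  have hlog3c : 0 < Real.log (3 / c) :=
    Real.log_pos (by rw [lt_div_iff₀ hc0]; linarith)
  have hd0 : 0 < d := div_pos (Real.log_pos one_lt_two) hlog3c
  have hρd : ρ ^ d = 2⁻¹ := by
    rw [Real.rpow_def_of_pos hρ0]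
    have hlogρ : Real.log ρ = -Real.log (3 / c) := by
      rw [hρdef, show c / 3 = (3 / c)⁻¹ by field_simp, Real.log_inv]
    have hde : d * Real.log ρ = -Real.log 2 := by
      rw [hlogρ, hddef]
      field_simp
    rw [mul_comm, hde, Real.exp_neg, Real.exp_log two_pos]
  -- the Frostman constant
  set C : ℝ≥0∞ := ENNReal.ofReal (2 * (κ * r 0) ^ (-d)) with hCdef
  have hCR : (0:ℝ) < 2 * (κ * r 0) ^ (-d) := by
    have h1 : 0 < κ * r 0 := mul_pos hκ0 (hrpos 0)
    exact mul_pos two_pos (Real.rpow_pos_of_pos h1 _)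
  have hC0 : C ≠ 0 := by
    rw [hCdef]
    exact (ENNReal.ofReal_pos.2 hCR).ne'
  have hCtop : C ≠ ⊤ := ENNReal.ofReal_ne_top
  -- main Frostman estimate
  have hmain : ∀ s : Set (EuclideanSpace ℝ (Fin n)), MeasurableSet s → EMetric.diam s ≤ ENNReal.ofReal (κ * r 1) →
      μ s ≤ C * EMetric.diam s ^ d := by
    intro s hs hsd
    rcases eq_or_lt_of_le (zero_le : 0 ≤ EMetric.diam s) with hd0' | hd0'
    · rw [hzero s hs hd0'.symm]
      exact zero_le
    · have hne_top : EMetric.diam s ≠ ⊤ :=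
        ne_top_of_le_ne_top ENNReal.ofReal_ne_top hsd
      set T : ℝ := (EMetric.diam s).toReal with hTdef
      have hT0 : 0 < T := ENNReal.toReal_pos hd0'.ne' hne_top
      have hTle : T ≤ κ * r 1 := by
        rw [hTdef]
        exact ENNReal.toReal_le_of_le_ofReal (mul_pos hκ0 (hrpos 1)).le hsd
      have hdiamT : EMetric.diam s = ENNReal.ofReal T := by
        rw [hTdef, ENNReal.ofReal_toReal hne_top]
      -- find the right scale k
      have hex : ∃ k : ℕ, κ * r (k + 1) ≤ T := by
        have hpos : (0:ℝ) < κ * (diam E / 4) := mul_pos hκ0 (by linarith)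
        obtain ⟨k, hk⟩ := exists_pow_lt_of_lt_one
          (show (0:ℝ) < T / (κ * (diam E / 4)) from div_pos hT0 hpos) hρ1
        refine ⟨k, ?_⟩
        have hk' : ρ ^ k * (κ * (diam E / 4)) < T := (lt_div_iff₀ hpos).1 hk
        have h3 : ρ ^ (k + 1) ≤ ρ ^ k := pow_le_pow_of_le_one hρ0.le hρ1.le (by omega)
        have h4 : κ * r (k + 1) = κ * (diam E / 4) * ρ ^ (k + 1) := by
          simp only [hrdef]; ring
        nlinarith
      set k := Nat.find hex with hkdef
      have hk1 : κ * r (k + 1) ≤ T := Nat.find_spec hex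
      have hk2 : T < κ * r k := by
        rcases Nat.eq_zero_or_pos k with h0 | hpos
        · rw [h0]
          have : κ * r 1 < κ * r 0 := by
            apply mul_lt_mul_of_pos_left _ hκ0
            rw [hrsucc 0]
            nlinarith [hrpos 0]
          linarith
        · obtain ⟨j, hj⟩ := Nat.exists_eq_succ_of_ne_zero hpos.ne'
          have := Nat.find_min hex (m := j) (by omega)
          rw [hj]
          push_neg at this
          exact this
      have hμs : μ s ≤ ENNReal.ofReal ((2:ℝ)⁻¹ ^ k) := by
        apply hfrost k s hs
        rw [hdiamT]
        exact (ENNReal.ofReal_lt_ofReal_iff (mul_pos hκ0 (hrpos k))).2 hk2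
      -- real computation
      have hreal : (2:ℝ)⁻¹ ^ k ≤ 2 * (κ * r 0) ^ (-d) * T ^ d := by
        have hκr0 : (0:ℝ) < κ * r 0 := mul_pos hκ0 (hrpos 0)
        have hTd : (κ * r (k + 1)) ^ d ≤ T ^ d :=
          Real.rpow_le_rpow (by positivity) hk1 hd0.le
        have heq : (κ * r (k + 1)) ^ d = (κ * r 0) ^ d * (2:ℝ)⁻¹ ^ (k + 1) := by
          have h1 : κ * r (k + 1) = (κ * r 0) * ρ ^ (k + 1) := by
            simp only [hrdef]
            ring
          rw [h1, Real.mul_rpow hκr0.le (pow_nonneg hρ0.le _),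
            ← Real.rpow_natCast ρ (k + 1), ← Real.rpow_mul hρ0.le,
            mul_comm (((k + 1 : ℕ)):ℝ) d, Real.rpow_mul hρ0.le, hρd,
            Real.rpow_natCast]
        have hinv : (κ * r 0) ^ (-d) * (κ * r 0) ^ d = 1 := by
          rw [← Real.rpow_add hκr0]
          simp
        calc (2:ℝ)⁻¹ ^ k = 2 * ((2:ℝ)⁻¹ ^ (k + 1)) := by
              rw [pow_succ]; ring
          _ = 2 * (κ * r 0) ^ (-d) * ((κ * r 0) ^ d * (2:ℝ)⁻¹ ^ (k + 1)) := by
              rw [show 2 * (κ * r 0) ^ (-d) * ((κ * r 0) ^ d * (2:ℝ)⁻¹ ^ (k + 1))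
                = 2 * ((κ * r 0) ^ (-d) * (κ * r 0) ^ d) * (2:ℝ)⁻¹ ^ (k + 1) by ring,
                hinv]
              ring
          _ ≤ 2 * (κ * r 0) ^ (-d) * T ^ d := by
              rw [← heq]
              apply mul_le_mul_of_nonneg_left hTd (by positivity)
      calc μ s ≤ ENNReal.ofReal ((2:ℝ)⁻¹ ^ k) := hμs
        _ ≤ ENNReal.ofReal (2 * (κ * r 0) ^ (-d) * T ^ d) := ENNReal.ofReal_le_ofReal hreal
        _ = C * EMetric.diam s ^ d := by
            rw [hCdef, hdiamT, ENNReal.ofReal_rpow_of_pos hT0, ← ENNReal.ofReal_mul hCR.le]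
  -- mass distribution principle
  have hν : C⁻¹ • μ ≤ μH[d] := by
    apply Measure.le_hausdorffMeasure d _ (ENNReal.ofReal (κ * r 1))
      (ENNReal.ofReal_pos.2 (mul_pos hκ0 (hrpos 1)))
    intro s hsd
    have hd1 : EMetric.diam (closure s) = EMetric.diam s := EMetric.diam_closure s
    have h1 : μ s ≤ μ (closure s) := measure_mono subset_closure
    have h2 : μ (closure s) ≤ C * EMetric.diam s ^ d := by
      rw [← hd1]
      exact hmain (closure s) isClosed_closure.measurableSet (hd1.symm ▸ hsd)
    calc (C⁻¹ • μ) s = C⁻¹ * μ s := by rw [Measure.smul_apply, smul_eq_mul]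
      _ ≤ C⁻¹ * (C * EMetric.diam s ^ d) := mul_le_mul_right (h1.trans h2) _
      _ = (C⁻¹ * C) * EMetric.diam s ^ d := by rw [mul_assoc]
      _ = EMetric.diam s ^ d := by rw [ENNReal.inv_mul_cancel hC0 hCtop, one_mul]
  have hμH : μH[d] E ≠ 0 := by
    have h1 : (C⁻¹ • μ) E ≤ μH[d] E := hν E
    have h2 : (C⁻¹ • μ) E = C⁻¹ := by
      rw [Measure.smul_apply, smul_eq_mul, hμE, mul_one]
    intro h0
    rw [h0] at h1
    rw [h2] at h1
    exact (ENNReal.inv_ne_zero.2 hCtop) (le_antisymm h1 zero_le)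
  -- conclude
  have hfinal : (d.toNNReal : ℝ≥0∞) ≤ dimH E := by
    apply le_dimH_of_hausdorffMeasure_ne_zero
    rwa [Real.coe_toNNReal d hd0.le]
  exact hfinal
end

section
/- Let n ≥ 2, let σ be a finite positive Borel measure on ℝ^n, and let h be a measure function. Let T be the set of those points x ∈ ℝ^n for which σ(B(x, r)) ≤ h(r) holds for all r > 0. Then there exists a constant N, depending only on n, such that Λ_h(ℝ^n \ T) ≤ N·σ(ℝ^n). -/
open Metric Set MeasureTheory ENNReal

/-- A measure function: a monotone increasing continuous function on `(0, ∞)` tending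
to `0` at `0` and to `+∞` at `+∞`. -/
def IsMeasureFunction (h : ℝ → ℝ) : Prop :=
  MonotoneOn h (Set.Ioi 0) ∧ ContinuousOn h (Set.Ioi 0) ∧
    Filter.Tendsto h (nhdsWithin 0 (Set.Ioi 0)) (nhds 0) ∧
    Filter.Tendsto h Filter.atTop Filter.atTop

/-- The `h`-Hausdorff content `Λ_h(A)`: the infimum of `∑ h(rₖ)` over all countable covers
of `A` by open balls `B(aₖ, rₖ)`. -/
noncomputable def hausdorffHContent {n : ℕ} (h : ℝ → ℝ)
    (A : Set (EuclideanSpace ℝ (Fin n))) : ℝ≥0∞ :=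
  ⨅ (c : ℕ → EuclideanSpace ℝ (Fin n)) (r : ℕ → ℝ) (_ : ∀ k, 0 < r k)
    (_ : A ⊆ ⋃ k, Metric.ball (c k) (r k)), ∑' k, ENNReal.ofReal (h (r k))

lemma aux_geom_sum : ∑' k : ℕ, ENNReal.ofReal ((1/2 : ℝ) ^ (k+1)) = 1 := by
  have hsum : Summable (fun k : ℕ => (1/2 : ℝ) ^ (k+1)) :=
    ((summable_geometric_of_lt_one (by norm_num) (by norm_num : (1/2 : ℝ) < 1)).mul_left
      (1/2)).congr (fun k => by ring)
  rw [← ENNReal.ofReal_tsum_of_nonneg (fun k => by positivity)]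
  · have : ∑' k : ℕ, (1/2 : ℝ) ^ (k+1) = 1 := by
      have h2 : ∑' k : ℕ, (1/2 : ℝ) ^ k = 2 := by
        rw [tsum_geometric_of_lt_one (by norm_num) (by norm_num)]; norm_num
      have : ∑' k : ℕ, (1/2 : ℝ) ^ (k+1) = ∑' k : ℕ, (1/2 : ℝ) * (1/2) ^ k := by
        congr 1; funext k; ring
      rw [this, tsum_mul_left, h2]; norm_num
    rw [this, ENNReal.ofReal_one]
  · exact hsum

/-- If `A` is covered by countably many balls of positive radius, the `h`-content of `A`
is at most the sum of `h` of the radii, plus `ε` (the `ε` slack accounts for padding the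
family out to an `ℕ`-indexed one with balls of tiny `h`-value). -/
lemma aux_content_le {n : ℕ} (h : ℝ → ℝ)
    (hzero : Filter.Tendsto h (nhdsWithin 0 (Set.Ioi 0)) (nhds 0))
    (A : Set (EuclideanSpace ℝ (Fin n))) {ι : Type} [Countable ι]
    (c : ι → EuclideanSpace ℝ (Fin n)) (r : ι → ℝ) (hr : ∀ i, 0 < r i)
    (hcov : A ⊆ ⋃ i, Metric.ball (c i) (r i)) {ε : ℝ} (hε : 0 < ε) :
    hausdorffHContent h A ≤ (∑' i, ENNReal.ofReal (h (r i))) + ENNReal.ofReal ε := by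
  -- pad radii
  have hpad : ∀ k : ℕ, ∃ ρ : ℝ, 0 < ρ ∧ h ρ < ε * (1/2) ^ (k+1) := by
    intro k
    have hpos : (0:ℝ) < ε * (1/2) ^ (k+1) := by positivity
    have := (hzero.eventually_lt_const hpos).and self_mem_nhdsWithin
    rcases this.exists with ⟨ρ, hρ1, hρ2⟩
    exact ⟨ρ, hρ2, hρ1⟩
  choose ρ hρpos hρlt using hpad
  obtain ⟨f, hf⟩ := Countable.exists_injective_nat ι
  classical
  set c' : ℕ → EuclideanSpace ℝ (Fin n) := fun k =>
    if hk : ∃ i, f i = k then c hk.choose else 0 with hc'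
  set r' : ℕ → ℝ := fun k => if hk : ∃ i, f i = k then r hk.choose else ρ k with hr'
  have hr'pos : ∀ k, 0 < r' k := by
    intro k
    by_cases hk : ∃ i, f i = k
    · simp only [hr', dif_pos hk]; exact hr _
    · simp only [hr', dif_neg hk]; exact hρpos k
  have hkey : ∀ i, c' (f i) = c i ∧ r' (f i) = r i := by
    intro i
    have hk : ∃ j, f j = f i := ⟨i, rfl⟩
    have : hk.choose = i := hf hk.choose_spec
    constructor
    · simp only [hc', dif_pos hk, this]
    · simp only [hr', dif_pos hk, this]
  have hcov' : A ⊆ ⋃ k, Metric.ball (c' k) (r' k) := by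
    intro x hx
    rcases mem_iUnion.1 (hcov hx) with ⟨i, hi⟩
    exact mem_iUnion.2 ⟨f i, by rw [(hkey i).1, (hkey i).2]; exact hi⟩
  have hle : hausdorffHContent h A ≤ ∑' k, ENNReal.ofReal (h (r' k)) := by
    exact iInf_le_of_le c' <| iInf_le_of_le r' <| iInf_le_of_le hr'pos <| iInf_le _ hcov'
  refine hle.trans ?_
  -- split the sum over range f and its complement
  have hsplit : ∑' k, ENNReal.ofReal (h (r' k)) =
      (∑' k : ↥(Set.range f), ENNReal.ofReal (h (r' k))) +
      ∑' k : ↥(Set.range f)ᶜ, ENNReal.ofReal (h (r' k)) :=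
    (Summable.tsum_add_tsum_compl (s := Set.range f) ENNReal.summable ENNReal.summable).symm
  rw [hsplit]
  gcongr
  · -- sum over range f equals sum over ι
    have := (Equiv.ofInjective f hf).tsum_eq
      (fun k : ↥(Set.range f) => ENNReal.ofReal (h (r' k)))
    rw [← this]
    apply le_of_eq
    apply tsum_congr
    intro i
    simp only [Equiv.ofInjective_apply]
    rw [(hkey i).2]
  · -- sum over complement is at most ε
    calc ∑' k : ↥(Set.range f)ᶜ, ENNReal.ofReal (h (r' k))
        ≤ ∑' k : ↥(Set.range f)ᶜ, ENNReal.ofReal (ε * (1/2) ^ ((k:ℕ)+1)) := by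
          apply ENNReal.tsum_le_tsum
          intro k
          have hk : ¬ ∃ i, f i = (k : ℕ) := by
            rcases k with ⟨k, hk⟩
            simpa [Set.mem_range] using hk
          simp only [hr', dif_neg hk]
          exact ENNReal.ofReal_le_ofReal (hρlt _).le
      _ ≤ ∑' k : ℕ, ENNReal.ofReal (ε * (1/2) ^ (k+1)) := by
          rw [tsum_subtype ((Set.range f)ᶜ) (fun k : ℕ => ENNReal.ofReal (ε * (1/2) ^ (k+1)))]
          exact ENNReal.tsum_le_tsum fun k =>
            Set.indicator_le_self _ (fun k => ENNReal.ofReal (ε * (1/2) ^ (k+1))) k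
      _ = ENNReal.ofReal ε := by
          have : ∀ k : ℕ, ENNReal.ofReal (ε * (1/2) ^ (k+1)) =
              ENNReal.ofReal ε * ENNReal.ofReal ((1/2 : ℝ) ^ (k+1)) := fun k =>
            ENNReal.ofReal_mul hε.le
          rw [tsum_congr this, ENNReal.tsum_mul_left, aux_geom_sum, mul_one]

theorem stmt_8 (n : ℕ) (hn : 2 ≤ n) :
    ∃ N : ℕ, 0 < N ∧
      ∀ (σ : Measure (EuclideanSpace ℝ (Fin n))), IsFiniteMeasure σ →
      ∀ h : ℝ → ℝ, IsMeasureFunction h →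
      ∀ T : Set (EuclideanSpace ℝ (Fin n)),
        T = {x | ∀ r : ℝ, 0 < r → σ (Metric.ball x r) ≤ ENNReal.ofReal (h r)} →
        hausdorffHContent h Tᶜ ≤ (N : ℝ≥0∞) * σ Set.univ := by
  obtain ⟨N, τ, hτ, hN⟩ :=
    HasBesicovitchCovering.no_satelliteConfig (α := EuclideanSpace ℝ (Fin n))
  refine ⟨max N 1, lt_of_lt_of_le one_pos (le_max_right _ _), ?_⟩
  intro σ hσfin h hh T hT
  have hmain : hausdorffHContent h Tᶜ ≤ (N : ℝ≥0∞) * σ Set.univ := by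
    apply ENNReal.le_of_forall_pos_le_add
    intro ε hε _
    -- radius bound
    obtain ⟨R, hR⟩ := (hh.2.2.2.eventually_ge_atTop ((σ Set.univ).toReal + 1)).exists_forall_of_atTop
    -- choose for each x ∉ T a bad radius
    have hbad : ∀ x : ↥(Tᶜ), ∃ ρ : ℝ, 0 < ρ ∧
        ENNReal.ofReal (h ρ) < σ (Metric.ball (x : EuclideanSpace ℝ (Fin n)) ρ) := by
      rintro ⟨x, hx⟩
      have : ¬ (∀ r : ℝ, 0 < r → σ (Metric.ball x r) ≤ ENNReal.ofReal (h r)) := by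
        simpa [hT] using hx
      push_neg at this
      rcases this with ⟨ρ, hρ, hlt⟩
      exact ⟨ρ, hρ, hlt⟩
    choose rx hrxpos hrxlt using hbad
    have hrxle : ∀ x, rx x ≤ R := by
      intro x
      by_contra hcon
      push_neg at hcon
      have h1 : (σ Set.univ).toReal + 1 ≤ h (rx x) := hR _ hcon.le
      have h2 : ENNReal.ofReal ((σ Set.univ).toReal + 1) ≤ ENNReal.ofReal (h (rx x)) :=
        ENNReal.ofReal_le_ofReal h1
      rw [ENNReal.ofReal_add ENNReal.toReal_nonneg zero_le_one,
        ENNReal.ofReal_toReal (measure_ne_top σ _), ENNReal.ofReal_one] at h2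
      have h3 : σ (Metric.ball (x : EuclideanSpace ℝ (Fin n)) (rx x)) ≤ σ Set.univ :=
        measure_mono (Set.subset_univ _)
      have h4 : σ Set.univ < σ Set.univ + 1 :=
        ENNReal.lt_add_right (measure_ne_top σ _) one_ne_zero
      exact lt_irrefl _ (((hrxlt x).trans_le h3).trans (h4.trans_le h2))
    set pkg : Besicovitch.BallPackage (↥(Tᶜ)) (EuclideanSpace ℝ (Fin n)) :=
      ⟨Subtype.val, rx, hrxpos, R, hrxle⟩ with hpkg
    obtain ⟨s, hdisj, hcov⟩ := Besicovitch.exist_disjoint_covering_families hτ hN pkg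
    -- each family is countable
    have hscount : ∀ i, (s i).Countable := by
      intro i
      apply (hdisj i).countable_of_nonempty_interior
      intro j _
      exact (nonempty_ball.2 (hrxpos j)).mono ball_subset_interior_closedBall
    set V : Set (↥(Tᶜ)) := ⋃ i, s i with hV
    have hVcount : V.Countable := Set.countable_iUnion hscount
    have : Countable ↥V := hVcount.to_subtype
    -- cover of Tᶜ by the balls indexed by V
    have hcov' : Tᶜ ⊆ ⋃ v : ↥V, Metric.ball ((v : ↥(Tᶜ)) : EuclideanSpace ℝ (Fin n))
        (rx (v : ↥(Tᶜ))) := by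
      intro x hx
      have hx' : x ∈ Set.range pkg.c := by
        rw [hpkg]; simpa [Subtype.range_val] using hx
      rcases Set.mem_iUnion.1 (hcov hx') with ⟨i, hi⟩
      rcases Set.mem_iUnion₂.1 hi with ⟨j, hj, hxj⟩
      exact Set.mem_iUnion.2 ⟨⟨j, Set.mem_iUnion.2 ⟨i, hj⟩⟩, hxj⟩
    have hεpos : (0:ℝ) < (ε : ℝ) := hε
    calc hausdorffHContent h Tᶜ
        ≤ (∑' v : ↥V, ENNReal.ofReal (h (rx (v : ↥(Tᶜ))))) + ENNReal.ofReal (ε : ℝ) :=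
          aux_content_le h hh.2.2.1 _ _ _ (fun v => hrxpos _) hcov' hεpos
      _ ≤ (N : ℝ≥0∞) * σ Set.univ + ε := by
          rw [ENNReal.ofReal_coe_nnreal]
          gcongr
          calc ∑' v : ↥V, ENNReal.ofReal (h (rx (v : ↥(Tᶜ))))
              ≤ ∑ i : Fin N, ∑' v : ↥(s i), ENNReal.ofReal (h (rx (v : ↥(Tᶜ)))) := by
                rw [hV]; exact ENNReal.tsum_iUnion_le (fun v : ↥(Tᶜ) => ENNReal.ofReal (h (rx v))) s
            _ ≤ ∑ i : Fin N, σ Set.univ := by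
                apply Finset.sum_le_sum
                intro i _
                have : Countable ↥(s i) := (hscount i).to_subtype
                calc ∑' v : ↥(s i), ENNReal.ofReal (h (rx (v : ↥(Tᶜ))))
                    ≤ ∑' v : ↥(s i), σ (Metric.ball ((v : ↥(Tᶜ)) :
                        EuclideanSpace ℝ (Fin n)) (rx (v : ↥(Tᶜ)))) :=
                      ENNReal.tsum_le_tsum fun v => (hrxlt _).le
                  _ = σ (⋃ v : ↥(s i), Metric.ball ((v : ↥(Tᶜ)) :
                        EuclideanSpace ℝ (Fin n)) (rx (v : ↥(Tᶜ)))) := by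
                      rw [measure_iUnion]
                      · intro v w hvw
                        have hne : (v : ↥(Tᶜ)) ≠ (w : ↥(Tᶜ)) := fun hc =>
                          hvw (Subtype.ext hc)
                        have := hdisj i v.2 w.2 hne
                        exact this.mono ball_subset_closedBall ball_subset_closedBall
                      · intro v; exact measurableSet_ball
                  _ ≤ σ Set.univ := measure_mono (Set.subset_univ _)
            _ = (N : ℝ≥0∞) * σ Set.univ := by
                rw [Finset.sum_const, Finset.card_univ, Fintype.card_fin, nsmul_eq_mul]
  refine hmain.trans ?_
  gcongr
  exact_mod_cast Nat.cast_le.2 (le_max_left N 1)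
end

section
/- Let n ≥ 2, let p ≥ 1 be an integer with index set I = {1, 2, …, p}, let 0 < c < 1 and r > 0. Suppose that closed balls B_{i₁i₂…i_k} = B̄(a_{i₁i₂…i_k}, c^k·r), indexed by finite words i₁, …, i_k ∈ I for k = 1, 2, 3, …, satisfy: (i) B_{i₁…i_{k−1}i} ∩ B_{i₁…i_{k−1}j} = ∅ for i ≠ j in I; and (ii) B_{i₁…i_k} ⊆ B_{i₁…i_{k−1}} for all i₁, …, i_k ∈ I. Then the compact set K = ∩_{k=1}^∞ ∪_{(i₁,…,i_k)∈I^k} B_{i₁i₂…i_k} satisfies Λ^β(K) ≥ r^β/(p·3^n), where β = −(log p)/(log c), and the Hausdorff dimension of K equals β. -/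
open Metric Set ENNReal

open MeasureTheory Filter

/-- prefix word -/
def pref {p : ℕ} (σ : ℕ → Fin p) (k : ℕ) : List (Fin p) := List.ofFn fun i : Fin k => σ i

lemma geom_half : (∑' k : ℕ, ((2:ℝ≥0∞)⁻¹) ^ (k+1)) = 1 := by
  have h1 : ∀ k : ℕ, ((2:ℝ≥0∞)⁻¹) ^ (k+1) = ((2:ℝ≥0∞)⁻¹) ^ k * 2⁻¹ := fun k => pow_succ _ _
  rw [tsum_congr h1, ENNReal.tsum_mul_right, ENNReal.tsum_geometric,
    ENNReal.one_sub_inv_two, inv_inv]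
  exact ENNReal.mul_inv_cancel (by norm_num) (by norm_num)

lemma aux_count_balls {n : ℕ} {ι : Type*} (S : Finset ι) (y : ι → EuclideanSpace ℝ (Fin n))
    {s : ℝ} (hs : 0 < s) (x : EuclideanSpace ℝ (Fin n))
    (hdisj : (S : Set ι).PairwiseDisjoint (fun i => closedBall (y i) s))
    (hsub : ∀ i ∈ S, closedBall (y i) s ⊆ closedBall x (3 * s)) :
    S.card ≤ 3 ^ n := by
  set μ := (volume : Measure (EuclideanSpace ℝ (Fin n)))
  set V := μ (ball (0 : EuclideanSpace ℝ (Fin n)) 1) with hV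
  have hV0 : V ≠ 0 := (measure_ball_pos μ _ one_pos).ne'
  have hVt : V ≠ ⊤ := measure_ball_lt_top.ne
  have h1 : ∀ i, μ (closedBall (y i) s) = ENNReal.ofReal (s ^ n) * V := fun i => by
    rw [Measure.addHaar_closedBall μ _ hs.le, finrank_euclideanSpace_fin]
  have h2 : μ (closedBall x (3 * s)) = ENNReal.ofReal (3 ^ n) * (ENNReal.ofReal (s ^ n) * V) := by
    rw [Measure.addHaar_closedBall μ _ (by positivity), finrank_euclideanSpace_fin,
      mul_pow, ENNReal.ofReal_mul (by positivity), mul_assoc]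
  have hsum : (S.card : ℝ≥0∞) * (ENNReal.ofReal (s ^ n) * V)
      ≤ ENNReal.ofReal (3 ^ n) * (ENNReal.ofReal (s ^ n) * V) := by
    calc (S.card : ℝ≥0∞) * (ENNReal.ofReal (s ^ n) * V)
        = ∑ i ∈ S, μ (closedBall (y i) s) := by
          rw [Finset.sum_congr rfl (fun i _ => h1 i), Finset.sum_const, nsmul_eq_mul]
      _ = μ (⋃ i ∈ S, closedBall (y i) s) :=
          (measure_biUnion_finset hdisj (fun i _ => measurableSet_closedBall)).symm
      _ ≤ μ (closedBall x (3 * s)) := measure_mono (iUnion₂_subset hsub)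
      _ = _ := h2
  have hne : ENNReal.ofReal (s ^ n) * V ≠ 0 := by
    simp only [ne_eq, mul_eq_zero, not_or]
    exact ⟨by simp [ENNReal.ofReal_eq_zero, not_le, pow_pos hs], hV0⟩
  have hnt : ENNReal.ofReal (s ^ n) * V ≠ ⊤ := ENNReal.mul_ne_top ENNReal.ofReal_ne_top hVt
  have hcard : (S.card : ℝ≥0∞) ≤ ENNReal.ofReal (3 ^ n) := by
    exact (ENNReal.mul_le_mul_iff_left hne hnt).mp hsum
  have h3 : ENNReal.ofReal ((3:ℝ) ^ n) = ((3 ^ n : ℕ) : ℝ≥0∞) := by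
    rw [ENNReal.ofReal_pow (by norm_num)]
    norm_num
  rw [h3] at hcard
  exact_mod_cast hcard

section Aux
variable {n p : ℕ} {c r : ℝ} {a : List (Fin p) → EuclideanSpace ℝ (Fin n)}
  {B : List (Fin p) → Set (EuclideanSpace ℝ (Fin n))}

lemma aux_nest (hnest : ∀ (l : List (Fin p)) (i : Fin p), l ≠ [] → B (l ++ [i]) ⊆ B l) :
    ∀ (w u : List (Fin p)), u ≠ [] → B (u ++ w) ⊆ B u := by
  intro w
  induction w using List.reverseRecOn with
  | nil => intro u hu; simp
  | append_singleton w i ih =>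
    intro u hu
    have h : u ++ (w ++ [i]) = (u ++ w) ++ [i] := by simp
    rw [h]
    exact (hnest (u ++ w) i (fun h => hu (List.append_eq_nil_iff.mp h).1)).trans (ih u hu)

lemma aux_disj (hdisj : ∀ (l : List (Fin p)) (i j : Fin p), i ≠ j →
      Disjoint (B (l ++ [i])) (B (l ++ [j])))
    (hnest : ∀ (l : List (Fin p)) (i : Fin p), l ≠ [] → B (l ++ [i]) ⊆ B l) :
    ∀ u v : List (Fin p), u.length = v.length → u ≠ v → Disjoint (B u) (B v) := by
  intro u
  induction u using List.reverseRecOn with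
  | nil =>
    intro v hlen hne
    exact absurd (List.length_eq_zero_iff.mp hlen.symm).symm hne
  | append_singleton u i ih =>
    intro v hlen hne
    rcases v.eq_nil_or_concat with rfl | ⟨v', j, rfl⟩
    · simp at hlen
    · simp only [List.concat_eq_append] at *
      have hlen' : u.length = v'.length := by simpa using hlen
      by_cases huv : u = v'
      · subst huv
        exact hdisj u i j (by rintro rfl; exact hne rfl)
      · rcases eq_or_ne u [] with rfl | hu
        · exact absurd (List.length_eq_zero_iff.mp hlen'.symm).symm huv
        · have hv : v' ≠ [] := by
            intro h; subst h
            exact hu (List.length_eq_zero_iff.mp hlen')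
          exact (ih v' hlen' huv).mono (hnest u i hu) (hnest v' j hv)

lemma pref_succ {p : ℕ} (σ : ℕ → Fin p) (k : ℕ) :
    pref σ (k + 1) = pref σ k ++ [σ k] := by
  rw [pref, List.ofFn_succ', List.concat_eq_append]
  simp [pref]

lemma pref_ne_nil {p : ℕ} (σ : ℕ → Fin p) (k : ℕ) : pref σ (k + 1) ≠ [] := by
  simp [pref_succ]

lemma pref_length {p : ℕ} (σ : ℕ → Fin p) (k : ℕ) : (pref σ k).length = k := by
  simp [pref]

lemma aux_point (hc0 : 0 < c) (hc1 : c < 1) (hr : 0 < r)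
    (hB : ∀ l : List (Fin p), B l = Metric.closedBall (a l) (c ^ l.length * r))
    (hnest : ∀ (l : List (Fin p)) (i : Fin p), l ≠ [] → B (l ++ [i]) ⊆ B l)
    (σ : ℕ → Fin p) : ∃ x, ∀ k, x ∈ B (pref σ (k + 1)) := by
  have hne : ∀ k, (B (pref σ (k + 1))).Nonempty := by
    intro k
    rw [hB]
    exact (Metric.nonempty_closedBall).mpr (by positivity)
  have hsub : ∀ k, B (pref σ (k + 2)) ⊆ B (pref σ (k + 1)) := by
    intro k
    rw [show pref σ (k + 2) = pref σ (k+1) ++ [σ (k+1)] from pref_succ σ (k+1)]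
    exact hnest _ _ (pref_ne_nil σ k)
  obtain ⟨x, hx⟩ := IsCompact.nonempty_iInter_of_sequence_nonempty_isCompact_isClosed
    (fun k => B (pref σ (k + 1))) hsub hne
    (by show IsCompact (B (pref σ 1)); rw [hB]; exact isCompact_closedBall _ _)
    (fun k => by show IsClosed (B (pref σ (k+1))); rw [hB]; exact Metric.isClosed_closedBall)
  exact ⟨x, fun k => mem_iInter.mp hx k⟩

lemma aux_level (k : ℕ) :
    (⋃ (l : List (Fin p)) (_ : l.length = k + 1), B l)
      = ⋃ w : Fin (k + 1) → Fin p, B (List.ofFn w) := by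
  ext z
  simp only [mem_iUnion]
  constructor
  · rintro ⟨l, hl, hz⟩
    refine ⟨fun i => l.get (Fin.cast hl.symm i), ?_⟩
    have h : List.ofFn (fun i : Fin (k+1) => l.get (Fin.cast hl.symm i)) = l := by
      apply List.ext_get (by simp [hl])
      intro i h1 h2
      rw [List.get_ofFn]
      simp
    rwa [h]
  · rintro ⟨w, hz⟩
    exact ⟨List.ofFn w, by simp, hz⟩

open scoped Classical in
lemma aux_meet (hp : 1 ≤ p) (hc0 : 0 < c) (hc1 : c < 1) (hr : 0 < r)
    (hB : ∀ l : List (Fin p), B l = Metric.closedBall (a l) (c ^ l.length * r))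
    (hdisj : ∀ (l : List (Fin p)) (i j : Fin p), i ≠ j →
      Disjoint (B (l ++ [i])) (B (l ++ [j])))
    (hnest : ∀ (l : List (Fin p)) (i : Fin p), l ≠ [] → B (l ++ [i]) ⊆ B l)
    {β : ℝ} (hβ0 : 0 < β) (hcb : c ^ β = (p : ℝ)⁻¹)
    {m : ℕ} (x : EuclideanSpace ℝ (Fin n)) {ρ : ℝ} (hρ : 0 < ρ) (hm : c ^ m * r < ρ) :
    ((Finset.univ.filter fun w : Fin m → Fin p =>
        (B (List.ofFn w) ∩ closedBall x ρ).Nonempty).card : ℝ)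
      ≤ 3 ^ n * (p : ℝ) ^ (m + 1) * ρ ^ β / r ^ β := by
  classical
  have ppos : (0 : ℝ) < p := by exact_mod_cast hp
  have rβ : (0:ℝ) < r ^ β := Real.rpow_pos_of_pos hr β
  by_cases hcase : ρ ≤ c * r
  · -- find the critical scale j
    obtain ⟨J, hJ⟩ : ∃ J, c ^ J * r < ρ := by
      obtain ⟨J, hJ⟩ := exists_pow_lt_of_lt_one (div_pos hρ hr) hc1
      exact ⟨J, by rwa [← lt_div_iff₀ hr]⟩
    have hcr : c * r < r := by nlinarith
    set P1 := fun j : ℕ => ρ ≤ c ^ j * r with hP1def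
    have h1J : 1 ≤ J := by
      rcases Nat.eq_zero_or_pos J with rfl | h
      · simp only [pow_zero, one_mul] at hJ; linarith
      · exact h
    set j := Nat.findGreatest P1 J with hjdef
    have hP1' : P1 1 := by simpa [P1] using hcase
    have hjge : 1 ≤ j := Nat.le_findGreatest h1J hP1'
    have hjspec : ρ ≤ c ^ j * r := Nat.findGreatest_spec h1J hP1'
    have hjlt : c ^ (j + 1) * r < ρ := by
      rcases le_or_gt (j + 1) J with h | h
      · have := Nat.findGreatest_is_greatest (Nat.lt_succ_self j) h
        simpa [P1, not_le] using this
      · have hjJ : j = J := le_antisymm (Nat.findGreatest_le J) (by omega)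
        rw [hjJ] at hjspec; linarith
    have hjm : j < m := by
      have hcm : c ^ m < c ^ j := by
        have := lt_of_lt_of_le hm hjspec
        exact lt_of_mul_lt_mul_right this hr.le
      exact (pow_lt_pow_iff_right_of_lt_one₀ hc0 hc1).mp hcm
    obtain ⟨d, rfl⟩ : ∃ d, m = j + d := ⟨m - j, by omega⟩
    -- the prefix set
    set s := c ^ j * r with hsdef
    have hs : 0 < s := by positivity
    set P : Finset (Fin j → Fin p) :=
      Finset.univ.filter fun u : Fin j → Fin p =>
        (B (List.ofFn u) ∩ closedBall x ρ).Nonempty with hPdef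
    have hBall : ∀ u : Fin j → Fin p, B (List.ofFn u) = closedBall (a (List.ofFn u)) s := by
      intro u; rw [hB]; simp [hsdef]
    have hPcard : P.card ≤ 3 ^ n := by
      apply aux_count_balls P (fun u => a (List.ofFn u)) hs x
      · intro u hu v hv huv
        have := aux_disj hdisj hnest (List.ofFn u) (List.ofFn v) (by simp)
          (fun h => huv (List.ofFn_injective h))
        rw [hBall u, hBall v] at this
        exact this
      · intro u hu
        obtain ⟨z, hz1, hz2⟩ := (Finset.mem_filter.mp hu).2
        rw [hBall u] at hz1
        apply closedBall_subset_closedBall'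
        have : dist (a (List.ofFn u)) x ≤ s + ρ :=
          (dist_triangle _ z _).trans (by
            rw [dist_comm _ z]
            exact add_le_add hz1 hz2)
        have hρs : ρ ≤ s := hjspec
        linarith
    -- main count
    set T := Finset.univ.filter fun w : Fin (j + d) → Fin p =>
        (B (List.ofFn w) ∩ closedBall x ρ).Nonempty with hTdef
    have hsplit : ∀ w : Fin (j + d) → Fin p,
        List.ofFn w = List.ofFn (fun i : Fin j => w (Fin.castAdd d i))
          ++ List.ofFn (fun i : Fin d => w (Fin.natAdd j i)) := fun w => List.ofFn_add (f := w)
    have hTP : ∀ w ∈ T, (fun i : Fin j => w (Fin.castAdd d i)) ∈ P := by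
      intro w hw
      obtain ⟨z, hz1, hz2⟩ := (Finset.mem_filter.mp hw).2
      refine Finset.mem_filter.mpr ⟨Finset.mem_univ _, ⟨z, ?_, hz2⟩⟩
      have hsubB : B (List.ofFn w) ⊆ B (List.ofFn fun i : Fin j => w (Fin.castAdd d i)) := by
        rw [hsplit w]
        exact aux_nest hnest _ _ (by
          intro h
          have := congrArg List.length h
          simp at this
          omega)
      exact hsubB hz1
    have hTcard : T.card ≤ p ^ d * 3 ^ n := by
      have := Finset.card_le_mul_card_image (f := fun w : Fin (j+d) → Fin p =>
        fun i : Fin j => w (Fin.castAdd d i)) T (p ^ d) ?_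
      · refine this.trans ?_
        apply Nat.mul_le_mul_left
        refine (Finset.card_le_card ?_).trans hPcard
        intro u hu
        obtain ⟨w, hw, rfl⟩ := Finset.mem_image.mp hu
        exact hTP w hw
      · intro u hu
        -- fiber bound: inject into suffix functions
        refine le_trans (Finset.card_le_card_of_injOn
          (t := (Finset.univ : Finset (Fin d → Fin p)))
          (fun w => fun i : Fin d => w (Fin.natAdd j i))
          (fun _ _ => Finset.mem_univ _) ?_) (by simp)
        intro w1 hw1 w2 hw2 heq
        simp only [Finset.coe_filter, mem_setOf_eq] at hw1 hw2
        have h1 : (fun i : Fin j => w1 (Fin.castAdd d i)) = u := hw1.2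
        have h2 : (fun i : Fin j => w2 (Fin.castAdd d i)) = u := hw2.2
        funext i
        refine Fin.addCases (fun i0 => ?_) (fun i0 => ?_) i
        · exact congrFun (h1.trans h2.symm) i0
        · exact congrFun heq i0
    -- arithmetic
    have hTreal : (T.card : ℝ) ≤ (p:ℝ) ^ d * 3 ^ n := by exact_mod_cast hTcard
    have hkey : ((c:ℝ) ^ (j+1)) ^ β = ((p:ℝ)⁻¹) ^ (j+1) := by
      rw [← Real.rpow_natCast c (j+1), ← Real.rpow_mul hc0.le, mul_comm,
        Real.rpow_mul hc0.le, hcb, Real.rpow_natCast]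
    have hmono : ((c:ℝ) ^ (j+1) * r) ^ β ≤ ρ ^ β :=
      Real.rpow_le_rpow (by positivity) hjlt.le hβ0.le
    have hsplitβ : ((c:ℝ) ^ (j+1) * r) ^ β = ((p:ℝ)⁻¹) ^ (j+1) * r ^ β := by
      rw [Real.mul_rpow (by positivity) hr.le, hkey]
    have hpd : (p:ℝ) ^ d = (p:ℝ) ^ (j + d + 1) * ((p:ℝ)⁻¹) ^ (j+1) := by
      rw [inv_pow, ← div_eq_mul_inv, _root_.eq_div_iff (by positivity : ((p:ℝ) ^ (j+1)) ≠ 0), ← pow_add]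
      congr 1
      omega
    calc (T.card : ℝ) ≤ (p:ℝ) ^ d * 3 ^ n := hTreal
      _ = 3 ^ n * ((p:ℝ) ^ (j + d + 1) * (((p:ℝ)⁻¹) ^ (j+1) * r ^ β)) / r ^ β := by
          rw [hpd]; field_simp
      _ ≤ 3 ^ n * ((p:ℝ) ^ (j + d + 1) * ρ ^ β) / r ^ β := by
          have hmono' : ((p:ℝ)⁻¹) ^ (j+1) * r ^ β ≤ ρ ^ β := hsplitβ ▸ hmono
          gcongr
      _ = 3 ^ n * (p:ℝ) ^ (j + d + 1) * ρ ^ β / r ^ β := by ring_nf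
  · -- trivial case ρ > c r
    push_neg at hcase
    have h1 : ((Finset.univ.filter fun w : Fin m → Fin p =>
        (B (List.ofFn w) ∩ closedBall x ρ).Nonempty).card : ℝ) ≤ (p:ℝ) ^ m := by
      have hle := Finset.card_filter_le (Finset.univ : Finset (Fin m → Fin p))
        (fun w => (B (List.ofFn w) ∩ closedBall x ρ).Nonempty)
      have hcard : (Finset.univ : Finset (Fin m → Fin p)).card = p ^ m := by simp
      exact_mod_cast le_trans hle hcard.le
    have h2 : r ^ β * (p:ℝ)⁻¹ ≤ ρ ^ β := by
      have : ((c:ℝ) * r) ^ β ≤ ρ ^ β := Real.rpow_le_rpow (by positivity) hcase.le hβ0.le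
      rwa [Real.mul_rpow hc0.le hr.le, hcb, mul_comm] at this
    refine h1.trans ?_
    rw [le_div_iff₀ rβ]
    have h3 : (1:ℝ) ≤ 3 ^ n := one_le_pow₀ (by norm_num)
    calc (p:ℝ) ^ m * r ^ β = (p:ℝ) ^ (m+1) * (r ^ β * (p:ℝ)⁻¹) := by
          field_simp; ring
      _ ≤ (p:ℝ) ^ (m+1) * ρ ^ β := mul_le_mul_of_nonneg_left h2 (by positivity)
      _ ≤ 3 ^ n * ((p:ℝ) ^ (m+1) * ρ ^ β) := le_mul_of_one_le_left (by positivity) h3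
      _ = 3 ^ n * (p:ℝ) ^ (m+1) * ρ ^ β := by ring

open scoped Classical in
lemma content_lb (hp : 1 ≤ p) (hc0 : 0 < c) (hc1 : c < 1) (hr : 0 < r)
    (hB : ∀ l : List (Fin p), B l = Metric.closedBall (a l) (c ^ l.length * r))
    (hdisj : ∀ (l : List (Fin p)) (i j : Fin p), i ≠ j →
      Disjoint (B (l ++ [i])) (B (l ++ [j])))
    (hnest : ∀ (l : List (Fin p)) (i : Fin p), l ≠ [] → B (l ++ [i]) ⊆ B l)
    {K : Set (EuclideanSpace ℝ (Fin n))}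
    (hK : K = ⋂ k : ℕ, ⋃ (l : List (Fin p)) (_ : l.length = k + 1), B l)
    {β : ℝ} (hβ0 : 0 < β) (hcb : c ^ β = (p : ℝ)⁻¹)
    (y : ℕ → EuclideanSpace ℝ (Fin n)) (ρ : ℕ → ℝ) (hρ : ∀ k, 0 < ρ k)
    (hcov : K ⊆ ⋃ k, ball (y k) (ρ k)) :
    ENNReal.ofReal (r ^ β / ((p : ℝ) * 3 ^ n)) ≤ ∑' k, ENNReal.ofReal (ρ k ^ β) := by
  have ppos : (0 : ℝ) < p := by exact_mod_cast hp
  have rβ : (0:ℝ) < r ^ β := Real.rpow_pos_of_pos hr β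
  haveI : Inhabited (Fin p) := ⟨⟨0, hp⟩⟩
  have hK' : K = ⋂ k : ℕ, ⋃ w : Fin (k + 1) → Fin p, B (List.ofFn w) := by
    rw [hK]; exact iInter_congr aux_level
  -- points of K in each ball
  have hpt : ∀ σ : ℕ → Fin p, ∃ x, x ∈ K ∧ ∀ k, x ∈ B (pref σ (k + 1)) := by
    intro σ
    obtain ⟨x, hx⟩ := aux_point hc0 hc1 hr hB hnest σ
    refine ⟨x, ?_, hx⟩
    rw [hK]
    exact mem_iInter.mpr fun k => mem_iUnion.mpr ⟨pref σ (k+1),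
      mem_iUnion.mpr ⟨pref_length σ (k+1), hx k⟩⟩
  -- K is compact and nonempty
  have hKcl : IsClosed K := by
    rw [hK']
    exact isClosed_iInter fun k => isClosed_iUnion_of_finite fun w => by
      rw [hB]; exact Metric.isClosed_closedBall
  have hlev0 : IsCompact (⋃ w : Fin 1 → Fin p, B (List.ofFn w)) :=
    isCompact_iUnion fun w => by rw [hB]; exact isCompact_closedBall _ _
  have hKc : IsCompact K :=
    IsCompact.of_isClosed_subset hlev0 hKcl
      (by rw [hK']; exact iInter_subset (fun k => ⋃ w : Fin (k + 1) → Fin p, B (List.ofFn w)) 0)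
  have hKne : K.Nonempty := by
    obtain ⟨x, hx, -⟩ := hpt (fun _ => default); exact ⟨x, hx⟩
  -- finite subcover
  obtain ⟨F, hF⟩ := hKc.elim_finite_subcover (fun k => ball (y k) (ρ k))
    (fun k => isOpen_ball) hcov
  have hFne : F.Nonempty := by
    obtain ⟨x0, hx0⟩ := hKne
    obtain ⟨k, hk⟩ := mem_iUnion.mp (hF hx0)
    obtain ⟨hkF, -⟩ := mem_iUnion.mp hk
    exact ⟨k, hkF⟩
  set δ := F.inf' hFne ρ with hδdef
  have hδ : 0 < δ := (Finset.lt_inf'_iff hFne).mpr fun k _ => hρ k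
  obtain ⟨m0, hm0⟩ := exists_pow_lt_of_lt_one (div_pos hδ hr) hc1
  set m := m0 + 1 with hmdef
  have hmδ : c ^ m * r < δ := by
    have h1 : c ^ m ≤ c ^ m0 := pow_le_pow_of_le_one hc0.le hc1.le (by omega)
    have := lt_of_le_of_lt h1 hm0
    calc c ^ m * r < (δ / r) * r := by
          apply mul_lt_mul_of_pos_right this hr
      _ = δ := by field_simp
  -- a point of K in each level-m ball
  have hxw : ∀ w : Fin m → Fin p, ∃ x, x ∈ K ∧ x ∈ B (List.ofFn w) := by
    intro w
    obtain ⟨x, hxK, hxB⟩ := hpt (fun i => if h : i < m then w ⟨i, h⟩ else default)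
    refine ⟨x, hxK, ?_⟩
    have h := hxB m0
    have heq : pref (fun i => if h : i < m then w ⟨i, h⟩ else default) (m0 + 1) = List.ofFn w := by
      unfold pref
      congr 1
      funext i
      simp only
      rw [dif_pos i.isLt]
    rwa [heq] at h
  choose xw hxwK hxwB using hxw
  -- each level-m ball meets some cover ball
  have hcover : ∀ w : Fin m → Fin p, ∃ k ∈ F,
      (B (List.ofFn w) ∩ closedBall (y k) (ρ k)).Nonempty := by
    intro w
    obtain ⟨k, hk⟩ := mem_iUnion.mp (hF (hxwK w))
    obtain ⟨hkF, hxk⟩ := mem_iUnion.mp hk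
    exact ⟨k, hkF, ⟨xw w, hxwB w, ball_subset_closedBall hxk⟩⟩
  -- counting
  have hcard : ((p:ℝ) ^ m) ≤ ∑ k ∈ F, ((Finset.univ.filter fun w : Fin m → Fin p =>
      (B (List.ofFn w) ∩ closedBall (y k) (ρ k)).Nonempty).card : ℝ) := by
    have hsub : (Finset.univ : Finset (Fin m → Fin p)) ⊆
        F.biUnion (fun k => Finset.univ.filter fun w : Fin m → Fin p =>
          (B (List.ofFn w) ∩ closedBall (y k) (ρ k)).Nonempty) := by
      intro w _
      obtain ⟨k, hk, hne⟩ := hcover w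
      exact Finset.mem_biUnion.mpr ⟨k, hk, Finset.mem_filter.mpr ⟨Finset.mem_univ _, hne⟩⟩
    have h1 : (p : ℕ) ^ m ≤ ∑ k ∈ F, (Finset.univ.filter fun w : Fin m → Fin p =>
        (B (List.ofFn w) ∩ closedBall (y k) (ρ k)).Nonempty).card := by
      calc p ^ m = (Finset.univ : Finset (Fin m → Fin p)).card := by simp
        _ ≤ _ := (Finset.card_le_card hsub).trans (Finset.card_biUnion_le)
    exact_mod_cast h1
  have hsum : r ^ β / ((p:ℝ) * 3 ^ n) ≤ ∑ k ∈ F, ρ k ^ β := by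
    have h1 : ∀ k ∈ F, ((Finset.univ.filter fun w : Fin m → Fin p =>
        (B (List.ofFn w) ∩ closedBall (y k) (ρ k)).Nonempty).card : ℝ)
        ≤ 3 ^ n * (p:ℝ) ^ (m + 1) * ρ k ^ β / r ^ β := by
      intro k hk
      exact aux_meet hp hc0 hc1 hr hB hdisj hnest hβ0 hcb (y k) (hρ k)
        (lt_of_lt_of_le hmδ (Finset.inf'_le ρ hk))
    have h2 : ((p:ℝ) ^ m) ≤ ∑ k ∈ F, 3 ^ n * (p:ℝ) ^ (m + 1) * ρ k ^ β / r ^ β :=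
      hcard.trans (Finset.sum_le_sum h1)
    have h3 : ∑ k ∈ F, 3 ^ n * (p:ℝ) ^ (m + 1) * ρ k ^ β / r ^ β
        = (3 ^ n * (p:ℝ) ^ (m + 1) / r ^ β) * ∑ k ∈ F, ρ k ^ β := by
      rw [Finset.mul_sum]
      exact Finset.sum_congr rfl fun k _ => by ring
    rw [h3] at h2
    rw [div_le_iff₀ (by positivity)]
    have hS : 0 ≤ ∑ k ∈ F, ρ k ^ β :=
      Finset.sum_nonneg fun k _ => (Real.rpow_pos_of_pos (hρ k) β).le
    -- h2 : p^m ≤ (3^n * p^(m+1) / r^β) * S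
    -- goal : r^β ≤ S * (p * 3^n)
    have hpm : (0:ℝ) < (p:ℝ) ^ m := by positivity
    rw [div_mul_eq_mul_div, le_div_iff₀ rβ] at h2
    -- h2 : p^m * r^β ≤ 3^n * p^(m+1) * S
    have h4 : (p:ℝ) ^ (m+1) = (p:ℝ) ^ m * p := by rw [pow_succ]
    rw [h4] at h2
    nlinarith [h2]
  calc ENNReal.ofReal (r ^ β / ((p : ℝ) * 3 ^ n))
      ≤ ENNReal.ofReal (∑ k ∈ F, ρ k ^ β) := ENNReal.ofReal_le_ofReal hsum
    _ = ∑ k ∈ F, ENNReal.ofReal (ρ k ^ β) :=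
        ENNReal.ofReal_sum_of_nonneg fun k _ => (Real.rpow_pos_of_pos (hρ k) β).le
    _ ≤ ∑' k, ENNReal.ofReal (ρ k ^ β) := ENNReal.sum_le_tsum F

lemma aux_upper (hp : 1 ≤ p) (hc0 : 0 < c) (hc1 : c < 1) (hr : 0 < r)
    (hB : ∀ l : List (Fin p), B l = Metric.closedBall (a l) (c ^ l.length * r))
    {K : Set (EuclideanSpace ℝ (Fin n))}
    (hK' : K = ⋂ k : ℕ, ⋃ w : Fin (k + 1) → Fin p, B (List.ofFn w))
    {β : ℝ} (hβ0 : 0 < β) (hcb : c ^ β = (p : ℝ)⁻¹) :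
    μH[β] K ≤ ENNReal.ofReal ((2 * r) ^ β) := by
  have ppos : (0 : ℝ) < p := by exact_mod_cast hp
  have hbd : ∀ k : ℕ, (∑ w : Fin (k+1) → Fin p, EMetric.diam (B (List.ofFn w)) ^ β)
      ≤ ENNReal.ofReal ((2 * r) ^ β) := by
    intro k
    have hdiam : ∀ w : Fin (k+1) → Fin p,
        EMetric.diam (B (List.ofFn w)) ≤ ENNReal.ofReal (2 * (c ^ (k+1) * r)) := by
      intro w
      rw [hB]
      apply Metric.ediam_le_of_forall_dist_le
      intro z1 hz1 z2 hz2
      have h1 : dist z1 (a (List.ofFn w)) ≤ c ^ (List.ofFn w).length * r := hz1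
      have h2 : dist z2 (a (List.ofFn w)) ≤ c ^ (List.ofFn w).length * r := hz2
      have hlen : (List.ofFn w).length = k + 1 := by simp
      rw [hlen] at h1 h2
      calc dist z1 z2 ≤ dist z1 (a (List.ofFn w)) + dist (a (List.ofFn w)) z2 := dist_triangle _ _ _
        _ ≤ c ^ (k+1) * r + c ^ (k+1) * r := by rw [dist_comm (a (List.ofFn w)) z2]; linarith
        _ = 2 * (c ^ (k+1) * r) := by ring
    have hterm : ∀ w : Fin (k+1) → Fin p, EMetric.diam (B (List.ofFn w)) ^ β
        ≤ ENNReal.ofReal ((2 * (c ^ (k+1) * r)) ^ β) := by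
      intro w
      rw [← ENNReal.ofReal_rpow_of_nonneg (by positivity) hβ0.le]
      exact ENNReal.rpow_le_rpow (hdiam w) hβ0.le
    calc (∑ w : Fin (k+1) → Fin p, EMetric.diam (B (List.ofFn w)) ^ β)
        ≤ ∑ _w : Fin (k+1) → Fin p, ENNReal.ofReal ((2 * (c ^ (k+1) * r)) ^ β) :=
          Finset.sum_le_sum fun w _ => hterm w
      _ = (Fintype.card (Fin (k+1) → Fin p)) * ENNReal.ofReal ((2 * (c ^ (k+1) * r)) ^ β) := by
          rw [Finset.sum_const, nsmul_eq_mul, Finset.card_univ]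
      _ = ENNReal.ofReal ((p:ℝ) ^ (k+1) * (2 * (c ^ (k+1) * r)) ^ β) := by
          rw [ENNReal.ofReal_mul (by positivity)]
          congr 1
          rw [Fintype.card_fun]
          simp only [Fintype.card_fin]
          rw [ENNReal.ofReal_pow ppos.le]
          simp [ENNReal.ofReal_natCast]
      _ = ENNReal.ofReal ((2 * r) ^ β) := by
          congr 1
          have hkey : ((c:ℝ) ^ (k+1)) ^ β = ((p:ℝ)⁻¹) ^ (k+1) := by
            rw [← Real.rpow_natCast c (k+1), ← Real.rpow_mul hc0.le, mul_comm,
              Real.rpow_mul hc0.le, hcb, Real.rpow_natCast]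
          rw [show (2 : ℝ) * (c ^ (k+1) * r) = (2 * r) * c ^ (k+1) by ring,
            Real.mul_rpow (by positivity) (by positivity), hkey]
          field_simp
          rw [one_div, ← mul_pow, mul_inv_cancel₀ ppos.ne', one_pow]
  have hcov : ∀ k : ℕ, K ⊆ ⋃ w : Fin (k+1) → Fin p, B (List.ofFn w) := by
    intro k
    rw [hK']
    exact iInter_subset _ k
  have hlim : Tendsto (fun k : ℕ => ENNReal.ofReal (2 * (c ^ (k+1) * r))) atTop (nhds 0) := by
    have h1 : Tendsto (fun k : ℕ => 2 * (c ^ (k+1) * r)) atTop (nhds 0) := by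
      have h2 : Tendsto (fun k : ℕ => c ^ k) atTop (nhds 0) :=
        tendsto_pow_atTop_nhds_zero_of_lt_one hc0.le hc1
      have h3 : Tendsto (fun k : ℕ => (2 * r * c) * c ^ k) atTop (nhds ((2 * r * c) * 0)) :=
        h2.const_mul _
      rw [mul_zero] at h3
      refine h3.congr fun k => by ring
    have := (ENNReal.continuous_ofReal.tendsto 0).comp h1
    simpa only [ENNReal.ofReal_zero, Function.comp_def] using this
  have := MeasureTheory.Measure.hausdorffMeasure_le_liminf_sum β K
    (fun k : ℕ => ENNReal.ofReal (2 * (c ^ (k+1) * r))) hlim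
    (fun k (w : Fin (k+1) → Fin p) => B (List.ofFn w))
    (Eventually.of_forall fun k w => by
      show EMetric.diam (B (List.ofFn w)) ≤ ENNReal.ofReal (2 * (c ^ (k + 1) * r))
      rw [hB]
      apply Metric.ediam_le_of_forall_dist_le
      intro z1 hz1 z2 hz2
      have hlen : (List.ofFn w).length = k + 1 := by simp
      rw [hlen] at hz1 hz2
      calc dist z1 z2 ≤ dist z1 (a (List.ofFn w)) + dist (a (List.ofFn w)) z2 := dist_triangle _ _ _
        _ ≤ c ^ (k+1) * r + c ^ (k+1) * r := by
            rw [dist_comm (a (List.ofFn w)) z2]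
            exact add_le_add hz1 hz2
        _ = 2 * (c ^ (k+1) * r) := by ring)
    (Eventually.of_forall hcov)
  refine this.trans ?_
  exact liminf_le_of_frequently_le (Frequently.of_forall fun k => hbd k)

end Aux

lemma aux_muH {n : ℕ} {K : Set (EuclideanSpace ℝ (Fin n))} {β L : ℝ} (hβ0 : 0 < β)
    (hKne : K.Nonempty)
    (hcontent : ∀ (y : ℕ → EuclideanSpace ℝ (Fin n)) (ρ : ℕ → ℝ), (∀ k, 0 < ρ k) →
      K ⊆ ⋃ k, ball (y k) (ρ k) → ENNReal.ofReal L ≤ ∑' k, ENNReal.ofReal (ρ k ^ β)) :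
    ENNReal.ofReal L ≤ μH[β] K := by
  rw [MeasureTheory.Measure.hausdorffMeasure_apply]
  refine le_iSup₂_of_le 1 one_pos ?_
  refine le_iInf fun t => le_iInf fun hcov => le_iInf fun hdiam => ?_
  have hdt : ∀ k, EMetric.diam (t k) ≠ ⊤ :=
    fun k => (lt_of_le_of_lt (hdiam k) ENNReal.one_lt_top).ne
  have hed : ∀ k, EMetric.diam (t k) = ENNReal.ofReal (Metric.diam (t k)) :=
    fun k => (ENNReal.ofReal_toReal (hdt k)).symm
  classical
  apply ENNReal.le_of_forall_pos_le_add
  intro ε hε _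
  have hδex : ∀ k : ℕ, ∃ δ : ℝ, 0 < δ ∧
      (Metric.diam (t k) + δ) ^ β ≤ Metric.diam (t k) ^ β + (ε:ℝ) * (2:ℝ)⁻¹ ^ (k+1) := by
    intro k
    have hcont := Real.continuousAt_rpow_const (Metric.diam (t k)) β (Or.inr hβ0.le)
    have hmem : (fun x : ℝ => x ^ β) ⁻¹'
        (Iio (Metric.diam (t k) ^ β + (ε:ℝ) * (2:ℝ)⁻¹ ^ (k+1))) ∈ nhds (Metric.diam (t k)) :=
      hcont (Iio_mem_nhds (lt_add_of_pos_right _ (by positivity)))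
    obtain ⟨δ, hδ0, hδsub⟩ := Metric.mem_nhds_iff.mp hmem
    refine ⟨δ/2, half_pos hδ0, ?_⟩
    have hmem2 : Metric.diam (t k) + δ/2 ∈ Metric.ball (Metric.diam (t k)) δ := by
      rw [Metric.mem_ball, Real.dist_eq, add_sub_cancel_left, abs_of_pos (half_pos hδ0)]
      linarith
    exact (hδsub hmem2).le
  choose δf hδ0 hδle using hδex
  obtain ⟨x0, -⟩ := hKne
  set y : ℕ → EuclideanSpace ℝ (Fin n) :=
    fun k => if h : (t k).Nonempty then h.choose else x0 with hy
  set ρ : ℕ → ℝ := fun k => Metric.diam (t k) + δf k with hρdef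
  have hcovb : K ⊆ ⋃ k, ball (y k) (ρ k) := by
    intro z hz
    obtain ⟨k, hk⟩ := mem_iUnion.mp (hcov hz)
    refine mem_iUnion.mpr ⟨k, ?_⟩
    have hne : (t k).Nonempty := ⟨z, hk⟩
    have hyk : y k ∈ t k := by
      show (if h : (t k).Nonempty then h.choose else x0) ∈ t k
      rw [dif_pos hne]; exact hne.choose_spec
    have hdist : dist z (y k) ≤ Metric.diam (t k) :=
      Metric.dist_le_diam_of_mem' (hdt k) hk hyk
    exact mem_ball.mpr (lt_of_le_of_lt hdist (lt_add_of_pos_right _ (hδ0 k)))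
  have hmain := hcontent y ρ
    (fun k => add_pos_of_nonneg_of_pos Metric.diam_nonneg (hδ0 k)) hcovb
  have hterm : ∀ k, ENNReal.ofReal ((Metric.diam (t k) + δf k) ^ β)
      ≤ (⨆ _ : (t k).Nonempty, EMetric.diam (t k) ^ β)
        + ENNReal.ofReal ((ε:ℝ) * (2:ℝ)⁻¹ ^ (k+1)) := by
    intro k
    have h1 : ENNReal.ofReal ((Metric.diam (t k) + δf k) ^ β)
        ≤ ENNReal.ofReal (Metric.diam (t k) ^ β + (ε:ℝ) * (2:ℝ)⁻¹ ^ (k+1)) :=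
      ENNReal.ofReal_le_ofReal (hδle k)
    rw [ENNReal.ofReal_add (Real.rpow_nonneg Metric.diam_nonneg β) (by positivity)] at h1
    refine h1.trans (add_le_add ?_ le_rfl)
    rcases eq_empty_or_nonempty (t k) with he | hne
    · rw [he, Metric.diam_empty, Real.zero_rpow hβ0.ne']
      simp
    · rw [iSup_pos hne, hed k, ENNReal.ofReal_rpow_of_nonneg Metric.diam_nonneg hβ0.le]
  have hgeom : (∑' k : ℕ, ENNReal.ofReal ((ε:ℝ) * (2:ℝ)⁻¹ ^ (k+1))) = (ε : ℝ≥0∞) := by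
    have h1 : ∀ k : ℕ, ENNReal.ofReal ((ε:ℝ) * (2:ℝ)⁻¹ ^ (k+1))
        = (ε : ℝ≥0∞) * ((2:ℝ≥0∞)⁻¹) ^ (k+1) := by
      intro k
      rw [ENNReal.ofReal_mul ε.coe_nonneg, ENNReal.ofReal_coe_nnreal,
        ENNReal.ofReal_pow (by norm_num), ENNReal.ofReal_inv_of_pos (by norm_num),
        ENNReal.ofReal_ofNat]
    rw [tsum_congr h1, ENNReal.tsum_mul_left, geom_half, mul_one]
  calc ENNReal.ofReal L ≤ ∑' k, ENNReal.ofReal ((Metric.diam (t k) + δf k) ^ β) := hmain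
    _ ≤ ∑' k, ((⨆ _ : (t k).Nonempty, EMetric.diam (t k) ^ β)
          + ENNReal.ofReal ((ε:ℝ) * (2:ℝ)⁻¹ ^ (k+1))) := ENNReal.tsum_le_tsum hterm
    _ = (∑' k, ⨆ _ : (t k).Nonempty, EMetric.diam (t k) ^ β)
          + ∑' k, ENNReal.ofReal ((ε:ℝ) * (2:ℝ)⁻¹ ^ (k+1)) := ENNReal.tsum_add
    _ ≤ (∑' k, ⨆ _ : (t k).Nonempty, EMetric.diam (t k) ^ β) + ε := by
        rw [hgeom]

theorem stmt_10 (n p : ℕ) (hn : 2 ≤ n) (hp : 1 ≤ p) (c r : ℝ)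
    (hc0 : 0 < c) (hc1 : c < 1) (hr : 0 < r)
    (a : List (Fin p) → EuclideanSpace ℝ (Fin n))
    (B : List (Fin p) → Set (EuclideanSpace ℝ (Fin n)))
    (hB : ∀ l : List (Fin p), B l = Metric.closedBall (a l) (c ^ l.length * r))
    (hdisj : ∀ (l : List (Fin p)) (i j : Fin p), i ≠ j →
      Disjoint (B (l ++ [i])) (B (l ++ [j])))
    (hnest : ∀ (l : List (Fin p)) (i : Fin p), l ≠ [] → B (l ++ [i]) ⊆ B l)
    (K : Set (EuclideanSpace ℝ (Fin n)))
    (hK : K = ⋂ k : ℕ, ⋃ (l : List (Fin p)) (_ : l.length = k + 1), B l)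
    (β : ℝ) (hβ : β = -(Real.log p) / Real.log c) :
    ENNReal.ofReal (r ^ β / ((p : ℝ) * 3 ^ n)) ≤ hausdorffContent β K ∧
    dimH K = ENNReal.ofReal β := by
  have hlogc : Real.log c < 0 := Real.log_neg hc0 hc1
  rcases eq_or_lt_of_le hp with hp1 | hp2
  · -- degenerate case p = 1, β = 0
    have hp1' : p = 1 := hp1.symm
    subst hp1'
    have hβ0 : β = 0 := by
      rw [hβ]
      simp
    subst hβ0
    constructor
    · -- content is infinite
      unfold hausdorffContent
      refine le_iInf fun y => le_iInf fun ρ => le_iInf fun hρ => le_iInf fun _ => ?_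
      have : (∑' k, ENNReal.ofReal (ρ k ^ (0:ℝ))) = ⊤ := by
        have h1 : ∀ k : ℕ, ENNReal.ofReal (ρ k ^ (0:ℝ)) = 1 := by
          intro k
          rw [Real.rpow_zero, ENNReal.ofReal_one]
        rw [tsum_congr h1]
        exact ENNReal.tsum_const_eq_top_of_ne_zero one_ne_zero
      rw [this]
      exact le_top
    · -- K is a subsingleton
      have hsub : K.Subsingleton := by
        intro x hx y hy
        have hdist : ∀ k : ℕ, dist x y ≤ 2 * (c ^ (k+1) * r) := by
          intro k
          rw [hK] at hx hy
          obtain ⟨l1, h1⟩ := mem_iUnion.mp (mem_iInter.mp hx k)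
          obtain ⟨hl1, hx2⟩ := mem_iUnion.mp h1
          obtain ⟨l2, h2⟩ := mem_iUnion.mp (mem_iInter.mp hy k)
          obtain ⟨hl2, hy2⟩ := mem_iUnion.mp h2
          have hl12 : l1 = l2 := by
            apply List.ext_get (by rw [hl1, hl2])
            intro i hi1 hi2
            exact Subsingleton.elim _ _
          subst hl12
          rw [hB, hl1] at hx2 hy2
          calc dist x y ≤ dist x (a l1) + dist (a l1) y := dist_triangle _ _ _
            _ ≤ c ^ (k+1) * r + c ^ (k+1) * r := by
                rw [dist_comm (a l1) y]
                exact add_le_add hx2 hy2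
            _ = 2 * (c ^ (k+1) * r) := by ring
        have hd0 : dist x y ≤ 0 := by
          by_contra hcon
          push_neg at hcon
          obtain ⟨k, hk⟩ := exists_pow_lt_of_lt_one
            (show (0:ℝ) < dist x y / (2 * r) by positivity) hc1
          have h1 := hdist k
          have h2 : c ^ (k+1) ≤ c ^ k := by
            rw [pow_succ]
            nlinarith [pow_pos hc0 k]
          have h3 : c ^ k * (2 * r) < dist x y := by
            rw [← lt_div_iff₀ (by positivity)]
            exact hk
          nlinarith
        exact dist_le_zero.mp hd0
      rw [dimH_subsingleton hsub, ENNReal.ofReal_zero]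
  · -- main case p ≥ 2
    have hp2' : (1:ℝ) < p := by exact_mod_cast hp2
    have ppos : (0:ℝ) < p := by linarith
    have hlogp : 0 < Real.log p := Real.log_pos hp2'
    have hβ0 : 0 < β := by
      have h : β = Real.log p / (-Real.log c) := by rw [hβ, div_neg, neg_div]
      rw [h]
      exact div_pos hlogp (neg_pos.mpr hlogc)
    have hmul : β * Real.log c = -Real.log p := by
      rw [hβ, div_mul_cancel₀ _ hlogc.ne]
    have hcb : c ^ β = (p : ℝ)⁻¹ := by
      rw [Real.rpow_def_of_pos hc0, mul_comm, hmul, Real.exp_neg, Real.exp_log ppos]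
    haveI : Inhabited (Fin p) := ⟨⟨0, hp⟩⟩
    have hKne : K.Nonempty := by
      obtain ⟨x, hx⟩ := aux_point hc0 hc1 hr hB hnest (fun _ => default)
      refine ⟨x, ?_⟩
      rw [hK]
      exact mem_iInter.mpr fun k => mem_iUnion.mpr ⟨pref (fun _ => default) (k+1),
        mem_iUnion.mpr ⟨pref_length _ (k+1), hx k⟩⟩
    have hK' : K = ⋂ k : ℕ, ⋃ w : Fin (k + 1) → Fin p, B (List.ofFn w) := by
      rw [hK]
      exact iInter_congr (aux_level (B := B))
    have hcontent : ∀ (y : ℕ → EuclideanSpace ℝ (Fin n)) (ρ : ℕ → ℝ), (∀ k, 0 < ρ k) →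
        K ⊆ ⋃ k, ball (y k) (ρ k) →
        ENNReal.ofReal (r ^ β / ((p : ℝ) * 3 ^ n)) ≤ ∑' k, ENNReal.ofReal (ρ k ^ β) :=
      fun y ρ h1 h2 => content_lb hp hc0 hc1 hr hB hdisj hnest hK hβ0 hcb y ρ h1 h2
    constructor
    · unfold hausdorffContent
      exact le_iInf fun y => le_iInf fun ρ => le_iInf fun h1 => le_iInf fun h2 =>
        hcontent y ρ h1 h2
    · have hlow := aux_muH hβ0 hKne hcontent
      have hupp := aux_upper hp hc0 hc1 hr hB hK' hβ0 hcb
      have hLpos : 0 < r ^ β / ((p : ℝ) * 3 ^ n) := by positivity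
      have hdc : ((β.toNNReal : NNReal) : ℝ) = β := Real.coe_toNNReal _ hβ0.le
      have hne0 : μH[((β.toNNReal : NNReal) : ℝ)] K ≠ 0 := by
        rw [hdc]
        exact (lt_of_lt_of_le (ENNReal.ofReal_pos.mpr hLpos) hlow).ne'
      have hnetop : μH[((β.toNNReal : NNReal) : ℝ)] K ≠ ⊤ := by
        rw [hdc]
        exact (lt_of_le_of_lt hupp ENNReal.ofReal_lt_top).ne
      have h1 := le_dimH_of_hausdorffMeasure_ne_zero hne0
      have h2 := dimH_le_of_hausdorffMeasure_ne_top hnetop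
      have hcoe : ((β.toNNReal : NNReal) : ℝ≥0∞) = ENNReal.ofReal β := rfl
      rw [hcoe] at h1 h2
      exact le_antisymm h2 h1
end

section
/- Let n ≥ 2 be an integer and K > 1 a real number, and define g(x) = log(1 + x)·(log(K/x))^{n−1} for 0 < x ≤ 1. Then g(x) ≤ K·((n−1)/e)^{n−1} for all 0 < x ≤ 1. In particular, for all x with 0 < x < 1, (log(K/x))^{1−n} ≥ (1/K)·(e/(n−1))^{n−1}·log(1 + x). -/
lemma aux_pow_le (m : ℕ) (hm : 1 ≤ m) (t : ℝ) (ht : 0 < t) :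
    t ^ m ≤ Real.exp t * ((m : ℝ) / Real.exp 1) ^ m := by
  have hm0 : (0:ℝ) < m := by exact_mod_cast Nat.lt_of_lt_of_le Nat.zero_lt_one hm
  have h1 : Real.log (t / m) ≤ t / m - 1 :=
    Real.log_le_sub_one_of_pos (by positivity)
  have h2 : t / m ≤ Real.exp (t / m - 1) := by
    calc t / m = Real.exp (Real.log (t/m)) := (Real.exp_log (by positivity)).symm
    _ ≤ _ := Real.exp_le_exp.mpr h1
  have h3 : t ≤ m * Real.exp (t/m - 1) := by
    rw [div_le_iff₀ hm0] at h2; linarith [h2]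
  calc t ^ m ≤ ((m:ℝ) * Real.exp (t/m - 1)) ^ m := pow_le_pow_left₀ ht.le h3 m
  _ = Real.exp t * ((m : ℝ) / Real.exp 1) ^ m := by
      have hme : (m:ℝ) * (t/m - 1) = t - m := by field_simp
      rw [mul_pow, ← Real.exp_nat_mul, hme, Real.exp_sub, div_pow,
        ← Real.exp_nat_mul, mul_one]
      ring

theorem stmt_11 (n : ℕ) (hn : 2 ≤ n) (K : ℝ) (hK : 1 < K) :
    (∀ x : ℝ, 0 < x → x ≤ 1 →
      Real.log (1 + x) * Real.log (K / x) ^ (n - 1) ≤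
        K * (((n : ℝ) - 1) / Real.exp 1) ^ (n - 1)) ∧
    (∀ x : ℝ, 0 < x → x < 1 →
      (1 / K) * (Real.exp 1 / ((n : ℝ) - 1)) ^ (n - 1) * Real.log (1 + x) ≤
        Real.log (K / x) ^ ((1 : ℝ) - (n : ℝ))) := by
  set m := n - 1 with hmdef
  have hm : 1 ≤ m := by omega
  have hcast : ((n : ℝ) - 1) = (m : ℝ) := by
    have : (n : ℝ) = ((m + 1 : ℕ) : ℝ) := by norm_cast; omega
    rw [this]; push_cast; ring
  have hK0 : (0:ℝ) < K := lt_trans one_pos hK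
  have main : ∀ x : ℝ, 0 < x → x ≤ 1 →
      Real.log (1 + x) * Real.log (K / x) ^ m ≤ K * ((m : ℝ) / Real.exp 1) ^ m := by
    intro x hx hx1
    set t := Real.log (K / x) with htdef
    have hKx : 1 < K / x := (one_lt_div hx).mpr (lt_of_le_of_lt hx1 hK)
    have ht : 0 < t := Real.log_pos hKx
    have hexp : Real.exp t = K / x := Real.exp_log (by positivity)
    have hlog : Real.log (1 + x) ≤ x := by
      have := Real.log_le_sub_one_of_pos (show (0:ℝ) < 1 + x by linarith)
      linarith
    have h1 : Real.log (1 + x) * t ^ m ≤ x * t ^ m :=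
      mul_le_mul_of_nonneg_right hlog (by positivity)
    have h2 : x * t ^ m ≤ x * (Real.exp t * ((m : ℝ) / Real.exp 1) ^ m) :=
      mul_le_mul_of_nonneg_left (aux_pow_le m hm t ht) hx.le
    have h3 : x * (Real.exp t * ((m : ℝ) / Real.exp 1) ^ m)
        = K * ((m : ℝ) / Real.exp 1) ^ m := by
      rw [hexp]; field_simp
    linarith
  constructor
  · intro x hx hx1
    rw [hcast]
    exact main x hx hx1
  · intro x hx hx1
    rw [hcast]
    set t := Real.log (K / x) with htdef
    have hKx : 1 < K / x := by
      rw [one_lt_div hx]; exact lt_trans hx1 hK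
    have ht : 0 < t := Real.log_pos hKx
    have hrw : t ^ ((1 : ℝ) - (n : ℝ)) = (t ^ m)⁻¹ := by
      have : (1 : ℝ) - (n : ℝ) = -(m : ℝ) := by rw [← hcast]; ring
      rw [this, Real.rpow_neg ht.le, Real.rpow_natCast]
    rw [hrw]
    have hmain := main x hx hx1.le
    have hlogpos : 0 ≤ Real.log (1 + x) := Real.log_nonneg (by linarith)
    have hm0 : (0:ℝ) < (m:ℝ) := by exact_mod_cast Nat.lt_of_lt_of_le Nat.zero_lt_one hm
    have hpowpos : (0:ℝ) < ((m : ℝ) / Real.exp 1) ^ m := by positivity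
    have htm : (0:ℝ) < t ^ m := by positivity
    rw [← one_div, le_div_iff₀ htm]
    have h4 : (1/K) * (Real.exp 1/(m:ℝ))^m * (Real.log (1+x) * t^m)
        ≤ (1/K) * (Real.exp 1/(m:ℝ))^m * (K * ((m:ℝ)/Real.exp 1)^m) :=
      mul_le_mul_of_nonneg_left hmain (by positivity)
    have h5 : (1/K) * (Real.exp 1/(m:ℝ))^m * (K * ((m:ℝ)/Real.exp 1)^m) = 1 := by
      rw [div_pow, div_pow]
      field_simp
    nlinarith [h4, h5]
end
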